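/- arXiv:1003.2292 — 3 statements merged into one kernel-verified Lean document; each statement's English description precedes it below -/
import Mathlib

section
/- In fermionic Fock space 𝓕_P over a complex Hilbert space H with projection P, the creation and annihilation operators a(f), a(g)* satisfying the CAR a(f)a(g)* + a(g)*a(f) = (f,g)·I and a(f)a(g) + a(g)a(f) = 0 have a cyclic vacuum vector Ω with inner products (a(g_m)*⋯a(g₁)*a(f₁)⋯a(f_n)Ω, Ω) = δ_{n,m}·det((Pf_i, g_j)); these relations determine 𝓕_P up to unitary equivalence: any two irreducible representations of the CAR with cyclic vectors satisfying these vacuum correlation formulas are unitarily equivalent. -/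
open scoped InnerProductSpace
open ContinuousLinearMap

noncomputable section

variable {H : Type*} [NormedAddCommGroup H] [InnerProductSpace ℂ H] [CompleteSpace H]

/-- `IsFockRep P F a Ω` : `a` is an (irreducible) representation of the canonical
anticommutation relations over `H` on `F`, with cyclic vacuum vector `Ω` whose
correlation functions are the determinants `det((P fᵢ, gⱼ))` determined by the
projection `P` — i.e. `F` "is" the fermionic Fock space `𝓕_P`.
(Here `(x, y)` denotes the inner product linear in `x`, i.e. `⟪y, x⟫_ℂ`.) -/
def IsFockRep (P : H →L[ℂ] H)
    (F : Type*) [NormedAddCommGroup F] [InnerProductSpace ℂ F] [CompleteSpace F]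
    (a : H → (F →L[ℂ] F)) (Ω : F) : Prop :=
  (∀ f g, a (f + g) = a f + a g) ∧
  (∀ (c : ℂ) f, a (c • f) = (starRingEnd ℂ) c • a f) ∧
  (∀ f g, a f * adjoint (a g) + adjoint (a g) * a f = ⟪g, f⟫_ℂ • (1 : F →L[ℂ] F)) ∧
  (∀ f g, a f * a g + a g * a f = 0) ∧
  (Submodule.topologicalClosure (Submodule.span ℂ
      {v : F | ∃ l : List (F →L[ℂ] F),
        (∀ T ∈ l, ∃ f, T = a f ∨ T = adjoint (a f)) ∧ v = l.prod Ω}) = ⊤) ∧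
  (∀ (n : ℕ) (f g : Fin n → H),
    ⟪Ω, (((List.ofFn fun i => adjoint (a (g i))).reverse.prod *
        (List.ofFn fun i => a (f i)).prod) Ω)⟫_ℂ =
      Matrix.det (Matrix.of fun i j : Fin n => ⟪g j, P (f i)⟫_ℂ)) ∧
  (∀ (n m : ℕ), n ≠ m → ∀ (f : Fin n → H) (g : Fin m → H),
    ⟪Ω, (((List.ofFn fun i => adjoint (a (g i))).reverse.prod *
        (List.ofFn fun i => a (f i)).prod) Ω)⟫_ℂ = 0) ∧
  (∀ K : Submodule ℂ F, IsClosed (K : Set F) →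
    (∀ f, ∀ x ∈ K, a f x ∈ K ∧ adjoint (a f) x ∈ K) → K = ⊥ ∨ K = ⊤)

namespace FockRepUnique

section Lists

variable {α : Type*}

def crCount : List (Bool × α) → ℕ
  | [] => 0
  | x :: t => (if x.1 = true then 1 else 0) + crCount t

def anCount : List (Bool × α) → ℕ
  | [] => 0
  | x :: t => (if x.1 = false then 1 else 0) + anCount t

def inv : List (Bool × α) → ℕ
  | [] => 0
  | x :: t => (if x.1 = true then 0 else crCount t) + inv t

def mu (l : List (Bool × α)) : ℕ := l.length + inv l

lemma crCount_append (p q : List (Bool × α)) :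
    crCount (p ++ q) = crCount p + crCount q := by
  induction p with
  | nil => simp [crCount]
  | cons x t ih => simp [crCount, ih, add_assoc]

lemma inv_append (p q : List (Bool × α)) :
    inv (p ++ q) = inv p + inv q + anCount p * crCount q := by
  induction p with
  | nil => simp [inv, anCount]
  | cons x t ih =>
    rcases x with ⟨b, u⟩
    cases b <;> simp [List.cons_append, inv, anCount, crCount_append, ih] <;> ring

lemma mu_swap (p s : List (Bool × α)) (f g : α) :
    mu (p ++ (true, g) :: (false, f) :: s) + 1 = mu (p ++ (false, f) :: (true, g) :: s) := by
  simp [mu, inv_append, List.length_append, List.length_cons, inv, crCount]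
  omega

lemma mu_drop (p s : List (Bool × α)) (f g : α) :
    mu (p ++ s) + 2 ≤ mu (p ++ (false, f) :: (true, g) :: s) := by
  have h : anCount p * crCount s ≤ anCount p * (1 + crCount s) :=
    Nat.mul_le_mul_left _ (by omega)
  simp [mu, inv_append, List.length_append, List.length_cons, inv, crCount]
  omega

lemma normal_or_swap (l : List (Bool × α)) :
    (∃ gs fs : List α, l = gs.map (fun g => (true, g)) ++ fs.map (fun f => (false, f))) ∨
    (∃ p s : List (Bool × α), ∃ f g : α, l = p ++ (false, f) :: (true, g) :: s) := by
  induction l with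
  | nil => exact Or.inl ⟨[], [], rfl⟩
  | cons x t ih =>
    rcases ih with ⟨gs, fs, rfl⟩ | ⟨p, s, f, g, rfl⟩
    · rcases x with ⟨b, u⟩
      cases b with
      | false =>
        cases gs with
        | nil => exact Or.inl ⟨[], u :: fs, rfl⟩
        | cons g gs' =>
          exact Or.inr ⟨[], gs'.map (fun g => (true, g)) ++ fs.map (fun f => (false, f)), u, g, rfl⟩
      | true => exact Or.inl ⟨u :: gs, fs, rfl⟩
    · exact Or.inr ⟨x :: p, s, f, g, rfl⟩

end Lists

section Ops

variable {F : Type*} [NormedAddCommGroup F] [InnerProductSpace ℂ F] [CompleteSpace F]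

def opOf (a : H → (F →L[ℂ] F)) : Bool × H → (F →L[ℂ] F)
  | (true, g) => adjoint (a g)
  | (false, f) => a f

def vecOf (a : H → (F →L[ℂ] F)) (Ω : F) (l : List (Bool × H)) : F :=
  (l.map (opOf a)).prod Ω

@[simp] lemma vecOf_nil (a : H → (F →L[ℂ] F)) (Ω : F) : vecOf a Ω [] = Ω := by
  simp [vecOf]

lemma vecOf_cons (a : H → (F →L[ℂ] F)) (Ω : F) (x : Bool × H) (l : List (Bool × H)) :
    vecOf a Ω (x :: l) = opOf a x (vecOf a Ω l) := by
  simp [vecOf, List.prod_cons, ContinuousLinearMap.mul_apply]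

lemma vecOf_append (a : H → (F →L[ℂ] F)) (Ω : F) (p q : List (Bool × H)) :
    vecOf a Ω (p ++ q) = ((p.map (opOf a)).prod) (vecOf a Ω q) := by
  simp [vecOf, List.map_append, List.prod_append, ContinuousLinearMap.mul_apply]

lemma adjoint_list_prod (l : List (F →L[ℂ] F)) :
    adjoint l.prod = (l.map (adjoint : (F →L[ℂ] F) → (F →L[ℂ] F))).reverse.prod := by
  induction l with
  | nil => simp [← star_eq_adjoint]
  | cons x t ih =>
    simp only [List.prod_cons, List.map_cons, List.reverse_cons, List.prod_append,
      List.prod_cons, List.prod_nil, mul_one, ← ih, ← star_eq_adjoint, star_mul]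

lemma vecOf_normal (a : H → (F →L[ℂ] F)) (Ω : F) {n m : ℕ} (fv : Fin n → H) (gv : Fin m → H) :
    vecOf a Ω ((List.ofFn gv).reverse.map (fun g => (true, g)) ++
        (List.ofFn fv).map (fun f => (false, f)))
      = (((List.ofFn fun i => adjoint (a (gv i))).reverse.prod *
          (List.ofFn fun i => a (fv i)).prod)) Ω := by
  simp only [vecOf, List.map_append, List.prod_append, List.map_map, ← List.map_reverse,
    ContinuousLinearMap.mul_apply]
  rw [List.map_reverse, List.map_ofFn, List.map_ofFn]
  rfl

lemma ofFn_cast {β : Type*} {n m : ℕ} (h : n = m) (G : Fin m → β) :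
    (List.ofFn fun i : Fin n => G (Fin.cast h i)) = List.ofFn G := by
  subst h; rfl

lemma inner_vecOf (a : H → (F →L[ℂ] F)) (Ω : F) (w w' : List (Bool × H)) :
    ⟪vecOf a Ω w, vecOf a Ω w'⟫_ℂ =
      ⟪Ω, vecOf a Ω ((w.map (fun x => (!x.1, x.2))).reverse ++ w')⟫_ℂ := by
  rw [vecOf_append]
  have hfun : ∀ x ∈ w, (adjoint : (F →L[ℂ] F) → (F →L[ℂ] F)) (opOf a x)
      = opOf a (!x.1, x.2) := by
    rintro ⟨b, u⟩ -
    cases b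
    · rfl
    · exact adjoint_adjoint _
  have hmap : (((w.map (fun x : Bool × H => (!x.1, x.2))).reverse).map (opOf a)).prod
      = adjoint ((w.map (opOf a)).prod) := by
    rw [adjoint_list_prod, List.map_map, List.map_reverse, List.map_map]
    congr 2
    exact (List.map_congr_left fun x hx => by rw [Function.comp_apply, hfun x hx]; rfl).symm
  rw [hmap, ContinuousLinearMap.adjoint_inner_right]
  rfl

lemma exists_word (a : H → (F →L[ℂ] F)) :
    ∀ (ops : List (F →L[ℂ] F)), (∀ T ∈ ops, ∃ f, T = a f ∨ T = adjoint (a f)) →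
      ∃ w : List (Bool × H), ops = w.map (opOf a) := by
  intro ops
  induction ops with
  | nil => exact fun _ => ⟨[], rfl⟩
  | cons T t iht =>
    intro hops
    rcases hops T List.mem_cons_self with ⟨f, hf | hf⟩
    · rcases iht (fun S hS => hops S (List.mem_cons_of_mem _ hS)) with ⟨w, rfl⟩
      exact ⟨(false, f) :: w, by rw [hf]; rfl⟩
    · rcases iht (fun S hS => hops S (List.mem_cons_of_mem _ hS)) with ⟨w, rfl⟩
      exact ⟨(true, f) :: w, by rw [hf]; rfl⟩

lemma range_vecOf (a : H → (F →L[ℂ] F)) (Ω : F) :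
    Set.range (vecOf a Ω) = {v : F | ∃ l : List (F →L[ℂ] F),
      (∀ T ∈ l, ∃ f, T = a f ∨ T = adjoint (a f)) ∧ v = l.prod Ω} := by
  ext v
  constructor
  · rintro ⟨w, rfl⟩
    refine ⟨w.map (opOf a), ?_, rfl⟩
    intro T hT
    rcases List.mem_map.mp hT with ⟨⟨b, u⟩, -, rfl⟩
    cases b
    · exact ⟨u, Or.inl rfl⟩
    · exact ⟨u, Or.inr rfl⟩
  · rintro ⟨ops, hops, rfl⟩
    rcases exists_word a ops hops with ⟨w, rfl⟩
    exact ⟨w, rfl⟩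

lemma dense_range_T (a : H → (F →L[ℂ] F)) (Ω : F)
    (hcyc : Submodule.topologicalClosure (Submodule.span ℂ
      {v : F | ∃ l : List (F →L[ℂ] F),
        (∀ T ∈ l, ∃ f, T = a f ∨ T = adjoint (a f)) ∧ v = l.prod Ω}) = ⊤) :
    Dense ((LinearMap.range (Finsupp.linearCombination ℂ (vecOf a Ω)) : Submodule ℂ F) :
      Set F) := by
  rw [Finsupp.range_linearCombination, range_vecOf]
  exact Submodule.dense_iff_topologicalClosure_eq_top.mpr hcyc

end Ops

end FockRepUnique

namespace FockRepUnique

lemma omega_eq (P : H →L[ℂ] H)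
    {F₁ : Type*} [NormedAddCommGroup F₁] [InnerProductSpace ℂ F₁] [CompleteSpace F₁]
    {F₂ : Type*} [NormedAddCommGroup F₂] [InnerProductSpace ℂ F₂] [CompleteSpace F₂]
    {a₁ : H → (F₁ →L[ℂ] F₁)} {Ω₁ : F₁} (h₁ : IsFockRep P F₁ a₁ Ω₁)
    {a₂ : H → (F₂ →L[ℂ] F₂)} {Ω₂ : F₂} (h₂ : IsFockRep P F₂ a₂ Ω₂)
    (l : List (Bool × H)) : ⟪Ω₁, vecOf a₁ Ω₁ l⟫_ℂ = ⟪Ω₂, vecOf a₂ Ω₂ l⟫_ℂ := by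
  obtain ⟨-, -, hcar₁, -, -, hdet₁, hz₁, -⟩ := h₁
  obtain ⟨-, -, hcar₂, -, -, hdet₂, hz₂, -⟩ := h₂
  suffices key : ∀ (n : ℕ) (l : List (Bool × H)), mu l = n →
      ⟪Ω₁, vecOf a₁ Ω₁ l⟫_ℂ = ⟪Ω₂, vecOf a₂ Ω₂ l⟫_ℂ by exact key (mu l) l rfl
  intro n
  induction n using Nat.strong_induction_on with
  | _ n ih =>
    intro l hl
    rcases normal_or_swap l with ⟨gs, fs, rfl⟩ | ⟨p, s, f, g, rfl⟩
    · have hw : gs.map (fun g => ((true : Bool), g)) ++ fs.map (fun f => ((false : Bool), f))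
          = (List.ofFn gs.reverse.get).reverse.map (fun g => ((true : Bool), g)) ++
            (List.ofFn fs.get).map (fun f => ((false : Bool), f)) := by
        rw [List.ofFn_get, List.ofFn_get, List.reverse_reverse]
      rw [hw, vecOf_normal, vecOf_normal]
      by_cases hnm : fs.length = gs.reverse.length
      · have e₁ : (List.ofFn fun i => adjoint (a₁ (gs.reverse.get i)))
            = List.ofFn fun i : Fin fs.length =>
                adjoint (a₁ (gs.reverse.get (Fin.cast hnm i))) :=
          (ofFn_cast hnm _).symm
        have e₂ : (List.ofFn fun i => adjoint (a₂ (gs.reverse.get i)))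
            = List.ofFn fun i : Fin fs.length =>
                adjoint (a₂ (gs.reverse.get (Fin.cast hnm i))) :=
          (ofFn_cast hnm _).symm
        rw [e₁, e₂, hdet₁ fs.length fs.get (fun i => gs.reverse.get (Fin.cast hnm i)),
          hdet₂ fs.length fs.get (fun i => gs.reverse.get (Fin.cast hnm i))]
      · rw [hz₁ fs.length gs.reverse.length hnm fs.get gs.reverse.get,
          hz₂ fs.length gs.reverse.length hnm fs.get gs.reverse.get]
    · have hswap₁ : vecOf a₁ Ω₁ (p ++ (false, f) :: (true, g) :: s)
          = ⟪g, f⟫_ℂ • vecOf a₁ Ω₁ (p ++ s)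
            - vecOf a₁ Ω₁ (p ++ (true, g) :: (false, f) :: s) := by
        have hop : a₁ f * adjoint (a₁ g) = ⟪g, f⟫_ℂ • 1 - adjoint (a₁ g) * a₁ f :=
          eq_sub_of_add_eq (hcar₁ f g)
        have happ : opOf a₁ (false, f) (opOf a₁ (true, g) (vecOf a₁ Ω₁ s))
            = ⟪g, f⟫_ℂ • vecOf a₁ Ω₁ s
              - opOf a₁ (true, g) (opOf a₁ (false, f) (vecOf a₁ Ω₁ s)) := by
          have := congrArg (fun T : F₁ →L[ℂ] F₁ => T (vecOf a₁ Ω₁ s)) hop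
          simpa [opOf, ContinuousLinearMap.mul_apply, ContinuousLinearMap.sub_apply,
            ContinuousLinearMap.smul_apply, ContinuousLinearMap.one_apply] using this
        rw [vecOf_append, vecOf_append, vecOf_append, vecOf_cons, vecOf_cons, vecOf_cons,
          vecOf_cons, happ, map_sub, map_smul]
      have hswap₂ : vecOf a₂ Ω₂ (p ++ (false, f) :: (true, g) :: s)
          = ⟪g, f⟫_ℂ • vecOf a₂ Ω₂ (p ++ s)
            - vecOf a₂ Ω₂ (p ++ (true, g) :: (false, f) :: s) := by
        have hop : a₂ f * adjoint (a₂ g) = ⟪g, f⟫_ℂ • 1 - adjoint (a₂ g) * a₂ f :=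
          eq_sub_of_add_eq (hcar₂ f g)
        have happ : opOf a₂ (false, f) (opOf a₂ (true, g) (vecOf a₂ Ω₂ s))
            = ⟪g, f⟫_ℂ • vecOf a₂ Ω₂ s
              - opOf a₂ (true, g) (opOf a₂ (false, f) (vecOf a₂ Ω₂ s)) := by
          have := congrArg (fun T : F₂ →L[ℂ] F₂ => T (vecOf a₂ Ω₂ s)) hop
          simpa [opOf, ContinuousLinearMap.mul_apply, ContinuousLinearMap.sub_apply,
            ContinuousLinearMap.smul_apply, ContinuousLinearMap.one_apply] using this
        rw [vecOf_append, vecOf_append, vecOf_append, vecOf_cons, vecOf_cons, vecOf_cons,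
          vecOf_cons, happ, map_sub, map_smul]
      have h1 := ih (mu (p ++ ((true : Bool), g) :: ((false : Bool), f) :: s))
        (by have := mu_swap p s f g; omega) _ rfl
      have h2 := ih (mu (p ++ s)) (by have := mu_drop p s f g; omega) _ rfl
      rw [hswap₁, hswap₂, inner_sub_right, inner_sub_right, inner_smul_right,
        inner_smul_right, h1, h2]

lemma inner_words_eq (P : H →L[ℂ] H)
    {F₁ : Type*} [NormedAddCommGroup F₁] [InnerProductSpace ℂ F₁] [CompleteSpace F₁]
    {F₂ : Type*} [NormedAddCommGroup F₂] [InnerProductSpace ℂ F₂] [CompleteSpace F₂]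
    {a₁ : H → (F₁ →L[ℂ] F₁)} {Ω₁ : F₁} (h₁ : IsFockRep P F₁ a₁ Ω₁)
    {a₂ : H → (F₂ →L[ℂ] F₂)} {Ω₂ : F₂} (h₂ : IsFockRep P F₂ a₂ Ω₂)
    (w w' : List (Bool × H)) :
    ⟪vecOf a₁ Ω₁ w, vecOf a₁ Ω₁ w'⟫_ℂ = ⟪vecOf a₂ Ω₂ w, vecOf a₂ Ω₂ w'⟫_ℂ := by
  rw [inner_vecOf, inner_vecOf, omega_eq P h₁ h₂]

end FockRepUnique

/-- Uniqueness of the Fock representation of the CAR: any two irreducible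
representations of the canonical anticommutation relations with cyclic vacuum
vectors satisfying the vacuum correlation formulas
`(a(g_m)*⋯a(g₁)* a(f₁)⋯a(f_n) Ω, Ω) = δ_{n,m} det((P fᵢ, gⱼ))`
are unitarily equivalent, by a unitary matching the vacua and intertwining the
CAR operators. -/
theorem fockRep_unique (P : H →L[ℂ] H)
    (hP : P ∘L P = P) (hPsa : IsSelfAdjoint P)
    (F₁ : Type*) [NormedAddCommGroup F₁] [InnerProductSpace ℂ F₁] [CompleteSpace F₁]
    (F₂ : Type*) [NormedAddCommGroup F₂] [InnerProductSpace ℂ F₂] [CompleteSpace F₂]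
    (a₁ : H → (F₁ →L[ℂ] F₁)) (Ω₁ : F₁) (h₁ : IsFockRep P F₁ a₁ Ω₁)
    (a₂ : H → (F₂ →L[ℂ] F₂)) (Ω₂ : F₂) (h₂ : IsFockRep P F₂ a₂ Ω₂) :
    ∃ U : F₁ ≃ₗᵢ[ℂ] F₂, U Ω₁ = Ω₂ ∧ ∀ f x, U (a₁ f x) = a₂ f (U x) := by
  classical
  have hcyc₁ := h₁.2.2.2.2.1
  have hcyc₂ := h₂.2.2.2.2.1
  set vec₁ := FockRepUnique.vecOf a₁ Ω₁ with hv₁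
  set vec₂ := FockRepUnique.vecOf a₂ Ω₂ with hv₂
  set T₁ := Finsupp.linearCombination ℂ vec₁ with hT₁def
  set T₂ := Finsupp.linearCombination ℂ vec₂ with hT₂def
  have hword := FockRepUnique.inner_words_eq P h₁ h₂
  -- inner products agree on the images of T₁, T₂
  have hinner : ∀ x y : List (Bool × H) →₀ ℂ, ⟪T₁ x, T₁ y⟫_ℂ = ⟪T₂ x, T₂ y⟫_ℂ := by
    intro x y
    have expand₁ : ⟪T₁ x, T₁ y⟫_ℂ
          = ∑ l ∈ x.support, ∑ l' ∈ y.support,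
              (starRingEnd ℂ) (x l) * (y l' * ⟪vec₁ l, vec₁ l'⟫_ℂ) := by
      rw [hT₁def, Finsupp.linearCombination_apply, Finsupp.linearCombination_apply,
        Finsupp.sum, Finsupp.sum, sum_inner]
      refine Finset.sum_congr rfl fun l _ => ?_
      rw [inner_smul_left, inner_sum, Finset.mul_sum]
      refine Finset.sum_congr rfl fun l' _ => ?_
      rw [inner_smul_right]
    have expand₂ : ⟪T₂ x, T₂ y⟫_ℂ
          = ∑ l ∈ x.support, ∑ l' ∈ y.support,
              (starRingEnd ℂ) (x l) * (y l' * ⟪vec₂ l, vec₂ l'⟫_ℂ) := by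
      rw [hT₂def, Finsupp.linearCombination_apply, Finsupp.linearCombination_apply,
        Finsupp.sum, Finsupp.sum, sum_inner]
      refine Finset.sum_congr rfl fun l _ => ?_
      rw [inner_smul_left, inner_sum, Finset.mul_sum]
      refine Finset.sum_congr rfl fun l' _ => ?_
      rw [inner_smul_right]
    rw [expand₁, expand₂]
    refine Finset.sum_congr rfl fun l _ => Finset.sum_congr rfl fun l' _ => ?_
    rw [hword l l']
  have hker : ∀ x y : List (Bool × H) →₀ ℂ, T₁ x = T₁ y → T₂ x = T₂ y := by
    intro x y h
    have h0 : ⟪T₂ (x - y), T₂ (x - y)⟫_ℂ = 0 := by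
      rw [← hinner (x - y) (x - y), map_sub, h, sub_self, inner_zero_left]
    have h1 : T₂ (x - y) = 0 := inner_self_eq_zero.mp h0
    rw [map_sub] at h1
    exact sub_eq_zero.mp h1
  have hdense₁ : Dense ((LinearMap.range T₁ : Submodule ℂ F₁) : Set F₁) :=
    FockRepUnique.dense_range_T a₁ Ω₁ hcyc₁
  have hdense₂ : Dense ((LinearMap.range T₂ : Submodule ℂ F₂) : Set F₂) :=
    FockRepUnique.dense_range_T a₂ Ω₂ hcyc₂
  have hmem : ∀ x, T₁ x ∈ LinearMap.range T₁ := fun x => LinearMap.mem_range_self _ x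
  have hselex : ∀ v : LinearMap.range T₁, ∃ x, T₁ x = (v : F₁) := fun v => v.2
  choose sel hsel using hselex
  have key : ∀ (x) (v : LinearMap.range T₁), T₁ x = (v : F₁) → T₂ x = T₂ (sel v) :=
    fun x v h => hker _ _ (h.trans (hsel v).symm)
  have hadd : ∀ u v : LinearMap.range T₁, T₂ (sel (u + v)) = T₂ (sel u) + T₂ (sel v) := by
    intro u v
    have h : T₁ (sel u + sel v) = ((u + v : LinearMap.range T₁) : F₁) := by
      rw [map_add, hsel u, hsel v]; rfl
    rw [← key _ (u + v) h, map_add]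
  have hsmul : ∀ (c : ℂ) (v : LinearMap.range T₁), T₂ (sel (c • v)) = c • T₂ (sel v) := by
    intro c v
    have h : T₁ (c • sel v) = ((c • v : LinearMap.range T₁) : F₁) := by
      rw [map_smul, hsel v]; rfl
    rw [← key _ (c • v) h, map_smul]
  let φ : LinearMap.range T₁ →ₗ[ℂ] F₂ :=
    { toFun := fun v => T₂ (sel v)
      map_add' := hadd
      map_smul' := hsmul }
  have hφkey : ∀ x, φ ⟨T₁ x, hmem x⟩ = T₂ x := fun x => (key x ⟨T₁ x, hmem x⟩ rfl).symm
  have hφinner : ∀ u v, ⟪φ u, φ v⟫_ℂ = ⟪u, v⟫_ℂ := by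
    intro u v
    show ⟪T₂ (sel u), T₂ (sel v)⟫_ℂ = _
    rw [← hinner, hsel u, hsel v, ← Submodule.coe_inner]
  have hφnorm : ∀ v, ‖φ v‖ = ‖v‖ := by
    intro v
    have h2' : ‖φ v‖ ^ 2 = ‖v‖ ^ 2 := by
      rw [← inner_self_eq_norm_sq (𝕜 := ℂ), ← inner_self_eq_norm_sq (𝕜 := ℂ), hφinner]
    nlinarith [norm_nonneg (φ v), norm_nonneg v]
  let e : LinearMap.range T₁ →ₗᵢ[ℂ] F₂ := ⟨φ, hφnorm⟩
  have hdr : DenseRange ((LinearMap.range T₁).subtypeL) := by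
    show Dense (Set.range ((LinearMap.range T₁).subtypeL))
    have heq : Set.range ((LinearMap.range T₁).subtypeL)
        = ((LinearMap.range T₁ : Submodule ℂ F₁) : Set F₁) := Subtype.range_coe
    rw [heq]; exact hdense₁
  have hui : IsUniformInducing ((LinearMap.range T₁).subtypeL) :=
    isUniformEmbedding_subtype_val.isUniformInducing
  let U₀ : F₁ →L[ℂ] F₂ :=
    ContinuousLinearMap.extend e.toContinuousLinearMap ((LinearMap.range T₁).subtypeL)
  have hU₀v : ∀ v : LinearMap.range T₁, U₀ v = e v := fun v =>
    ContinuousLinearMap.extend_eq _ hdr hui v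
  have hU₀T : ∀ x, U₀ (T₁ x) = T₂ x := fun x => (hU₀v ⟨T₁ x, hmem x⟩).trans (hφkey x)
  have hU₀norm : ∀ y, ‖U₀ y‖ = ‖y‖ := by
    have hcl : IsClosed {y : F₁ | ‖U₀ y‖ = ‖y‖} :=
      isClosed_eq U₀.continuous.norm continuous_norm
    have hsub : ((LinearMap.range T₁ : Submodule ℂ F₁) : Set F₁) ⊆ {y | ‖U₀ y‖ = ‖y‖} := by
      rintro _ ⟨x, rfl⟩
      show ‖U₀ (T₁ x)‖ = ‖T₁ x‖
      rw [hU₀T x, ← hφkey x]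
      exact hφnorm ⟨T₁ x, hmem x⟩
    intro y
    have hclos := closure_minimal hsub hcl
    rw [hdense₁.closure_eq] at hclos
    exact hclos (Set.mem_univ y)
  let U₁ : F₁ →ₗᵢ[ℂ] F₂ := ⟨U₀.toLinearMap, hU₀norm⟩
  have hU₁ : ∀ z, U₁ z = U₀ z := fun z => rfl
  have hclosedrange : IsClosed (Set.range U₁) := U₁.isometry.isClosedEmbedding.isClosed_range
  have hsub₂ : ((LinearMap.range T₂ : Submodule ℂ F₂) : Set F₂) ⊆ Set.range U₁ := by
    rintro _ ⟨x, rfl⟩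
    exact ⟨T₁ x, hU₀T x⟩
  have hsurj : Function.Surjective U₁ := by
    intro y
    have hclos := closure_minimal hsub₂ hclosedrange
    rw [hdense₂.closure_eq] at hclos
    exact hclos (Set.mem_univ y)
  let U := LinearIsometryEquiv.ofSurjective U₁ hsurj
  have hU : ∀ z, U z = U₀ z := fun z => by
    rw [show (U : F₁ → F₂) = U₁ from LinearIsometryEquiv.coe_ofSurjective U₁ hsurj]
    rfl
  have hmapd : ∀ (f : H) (x : List (Bool × H) →₀ ℂ),
      a₁ f (T₁ x) = T₁ (Finsupp.mapDomain (fun l => (false, f) :: l) x) := by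
    intro f x
    have hstep : a₁ f (T₁ x) = Finsupp.linearCombination ℂ (fun l => a₁ f (vec₁ l)) x := by
      rw [hT₁def, Finsupp.linearCombination_apply, Finsupp.linearCombination_apply,
        Finsupp.sum, Finsupp.sum, map_sum]
      exact Finset.sum_congr rfl fun l _ => by rw [map_smul]
    have hcomp : (fun l : List (Bool × H) => a₁ f (vec₁ l))
        = (vec₁ ∘ fun l => (false, f) :: l) := by
      funext l
      show a₁ f (vec₁ l) = vec₁ ((false, f) :: l)
      rw [hv₁, FockRepUnique.vecOf_cons]
      rfl
    rw [hstep, hcomp, hT₁def, Finsupp.linearCombination_mapDomain]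
  have hmapd₂ : ∀ (f : H) (x : List (Bool × H) →₀ ℂ),
      a₂ f (T₂ x) = T₂ (Finsupp.mapDomain (fun l => (false, f) :: l) x) := by
    intro f x
    have hstep : a₂ f (T₂ x) = Finsupp.linearCombination ℂ (fun l => a₂ f (vec₂ l)) x := by
      rw [hT₂def, Finsupp.linearCombination_apply, Finsupp.linearCombination_apply,
        Finsupp.sum, Finsupp.sum, map_sum]
      exact Finset.sum_congr rfl fun l _ => by rw [map_smul]
    have hcomp : (fun l : List (Bool × H) => a₂ f (vec₂ l))
        = (vec₂ ∘ fun l => (false, f) :: l) := by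
      funext l
      show a₂ f (vec₂ l) = vec₂ ((false, f) :: l)
      rw [hv₂, FockRepUnique.vecOf_cons]
      rfl
    rw [hstep, hcomp, hT₂def, Finsupp.linearCombination_mapDomain]
  refine ⟨U, ?_, ?_⟩
  · have h1 : T₁ (Finsupp.single ([] : List (Bool × H)) (1 : ℂ)) = Ω₁ := by
      rw [hT₁def, Finsupp.linearCombination_single, one_smul, hv₁, FockRepUnique.vecOf_nil]
    have h2 : T₂ (Finsupp.single ([] : List (Bool × H)) (1 : ℂ)) = Ω₂ := by
      rw [hT₂def, Finsupp.linearCombination_single, one_smul, hv₂, FockRepUnique.vecOf_nil]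
    rw [hU, ← h1, hU₀T, h2]
  · intro f x
    have hcl : IsClosed {z : F₁ | U₀ (a₁ f z) = a₂ f (U₀ z)} :=
      isClosed_eq (U₀.continuous.comp (a₁ f).continuous) ((a₂ f).continuous.comp U₀.continuous)
    have hsub : ((LinearMap.range T₁ : Submodule ℂ F₁) : Set F₁)
        ⊆ {z | U₀ (a₁ f z) = a₂ f (U₀ z)} := by
      rintro _ ⟨y, rfl⟩
      show U₀ (a₁ f (T₁ y)) = a₂ f (U₀ (T₁ y))
      rw [hmapd f y, hU₀T, hU₀T, ← hmapd₂ f y]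
    have hclos := closure_minimal hsub hcl
    rw [hdense₁.closure_eq] at hclos
    have := hclos (Set.mem_univ x)
    rw [hU, hU]
    exact this

end
end

section
/- Let A be a closed densely defined operator on a Hilbert space and B a bounded operator with 0 ≤ B ≤ I such that AB = BA on a core H^∞ for A with B H^∞ ⊆ 𝒟(A*A). Then B preserves 𝒟(A) with AB = BA on 𝒟(A), B preserves 𝒟(A*A) with A*AB = BA*A there, and B commutes with the phase (partial isometry part of the polar decomposition) of A. -/
open scoped InnerProductSpace

noncomputable section

variable {H : Type*} [NormedAddCommGroup H] [InnerProductSpace ℂ H] [CompleteSpace H]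

/-- `IsModulusOf A T` : `T` is the absolute value `|A| = (A*A)^{1/2}` of the closed
densely defined operator `A`: a positive self-adjoint operator with the same domain
satisfying `⟪Ax, Ay⟫ = ⟪Tx, Ty⟫`. -/
def IsModulusOf (A T : H →ₗ.[ℂ] H) : Prop :=
  T.domain = A.domain ∧ T.adjoint = T ∧
    (∀ x : T.domain, 0 ≤ (⟪(x : H), T x⟫_ℂ).re ∧ (⟪(x : H), T x⟫_ℂ).im = 0) ∧
    ∀ (x y : A.domain) (hx : (x : H) ∈ T.domain) (hy : (y : H) ∈ T.domain),
      ⟪A x, A y⟫_ℂ = ⟪T ⟨x, hx⟩, T ⟨y, hy⟩⟫_ℂ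

/-- `IsPhaseOf A V` : `V` is the phase (partial isometry part of the polar
decomposition `A = V|A|`) of `A`: `V(|A|x) = Ax` on the domain and `V = 0`
on the orthogonal complement of the range of `|A|`. -/
def IsPhaseOf (A : H →ₗ.[ℂ] H) (V : H →L[ℂ] H) : Prop :=
  ∃ T : H →ₗ.[ℂ] H, IsModulusOf A T ∧
    (∀ (x : A.domain) (hx : (x : H) ∈ T.domain), V (T ⟨x, hx⟩) = A x) ∧
    (∀ y : H, (∀ x : T.domain, ⟪y, T x⟫_ℂ = 0) → V y = 0)

/-- Applying equal `LinearPMap`s to equal points gives equal values. -/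
theorem pmap_congr' {f g : H →ₗ.[ℂ] H} (h : f = g) (x : H) (hx : x ∈ f.domain) :
    f ⟨x, hx⟩ = g ⟨x, h ▸ hx⟩ := by subst h; rfl

/-- Applying a `LinearPMap` to equal points gives equal values. -/
theorem pmap_happ (f : H →ₗ.[ℂ] H) (x y : H) (hx : x ∈ f.domain) (hy : y ∈ f.domain)
    (h : x = y) : f ⟨x, hx⟩ = f ⟨y, hy⟩ := by subst h; rfl

/-- A bounded operator commuting with a selfadjoint operator commutes with its
real continuous functional calculus. -/
theorem commute_cfc_real {a b : H →L[ℂ] H} (ha : IsSelfAdjoint a) (h : Commute b a)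
    (f : ℝ → ℝ) : Commute b (cfc f a) := by
  by_cases hf : ContinuousOn f (spectrum ℝ a)
  · rw [cfc_apply f a ha hf]
    set φ : C(spectrum ℝ a, ℝ) →⋆ₐ[ℝ] (H →L[ℂ] H) := cfcHom ha (R := ℝ)
    let Csub : Subalgebra ℝ C(spectrum ℝ a, ℝ) :=
      (Subalgebra.centralizer ℝ {b}).comap (φ.toAlgHom)
    have hXmem : (Polynomial.toContinuousMapOnAlgHom (spectrum ℝ a)) Polynomial.X ∈ Csub := by
      have hid : (Polynomial.toContinuousMapOnAlgHom (spectrum ℝ a)) Polynomial.X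
          = (ContinuousMap.id ℝ).restrict (spectrum ℝ a) := by
        ext x; simp
      simp only [Csub, Subalgebra.mem_comap, hid]
      rw [Subalgebra.mem_centralizer_iff]
      rintro c rfl
      simpa [φ, cfcHom_id ha] using h.eq
    have hclosedC : IsClosed (Csub : Set C(spectrum ℝ a, ℝ)) := by
      have : (Csub : Set C(spectrum ℝ a, ℝ)) =
          φ ⁻¹' {x : H →L[ℂ] H | b * x = x * b} := by
        ext g
        simp [Csub, Subalgebra.mem_comap, Subalgebra.mem_centralizer_iff,
          Set.mem_centralizer_iff]
      rw [this]
      exact IsClosed.preimage (cfcHom_isClosedEmbedding ha).continuous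
        (isClosed_eq (continuous_const.mul continuous_id) (continuous_id.mul continuous_const))
    have htop : (⊤ : Subalgebra ℝ C(spectrum ℝ a, ℝ)) ≤ Csub := by
      rw [← polynomialFunctions.topologicalClosure (spectrum ℝ a)]
      apply Subalgebra.topologicalClosure_minimal _ hclosedC
      rw [polynomialFunctions.eq_adjoin_X]
      exact Algebra.adjoin_le (by simpa using hXmem)
    have hmem : (⟨_, hf.restrict⟩ : C(spectrum ℝ a, ℝ)) ∈ Csub := htop (by trivial)
    simp only [Csub, Subalgebra.mem_comap, Subalgebra.mem_centralizer_iff,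
      Set.mem_centralizer_iff] at hmem
    exact hmem b rfl
  · rw [cfc_apply_of_not_continuousOn a hf]
    exact Commute.zero_right b

/-- A bounded operator commuting with the square of a positive operator commutes
with the operator itself. -/
theorem commute_of_commute_sq {z b : H →L[ℂ] H} (hz : 0 ≤ z) (h : Commute b (z * z)) :
    Commute b z := by
  have hzsa : IsSelfAdjoint z := by
    rw [ContinuousLinearMap.nonneg_iff_isPositive] at hz
    exact hz.isSelfAdjoint
  have hsq : z * z = z ^ 2 := (sq z).symm
  have hsa2 : IsSelfAdjoint (z ^ 2) := hzsa.pow 2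
  have key : cfc Real.sqrt (z ^ 2) = z := by
    have h1 : z ^ 2 = cfc (fun x : ℝ => x ^ 2) z := (cfc_pow_id z 2 hzsa).symm
    rw [h1, ← cfc_comp' Real.sqrt (fun x : ℝ => x ^ 2) z (by fun_prop) (by fun_prop)]
    calc cfc (fun x : ℝ => Real.sqrt (x ^ 2)) z = cfc (id : ℝ → ℝ) z := by
          apply cfc_congr
          intro x hx
          have : (0:ℝ) ≤ x := spectrum_nonneg_of_nonneg hz hx
          simp [Real.sqrt_sq this]
      _ = z := cfc_id ℝ z hzsa
  rw [← key]
  exact commute_cfc_real hsa2 (hsq ▸ h) Real.sqrt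

/-- von Neumann: `1 + A*A` is surjective for a closed densely defined operator. -/
theorem oneAddAdjointMulSelf_surjective
    (A : H →ₗ.[ℂ] H) (hdense : Dense (A.domain : Set H)) (hclosed : A.IsClosed) :
    ∀ v : H, ∃ (x : H) (hx : x ∈ A.domain) (hAx : A ⟨x, hx⟩ ∈ A.adjoint.domain),
      x + A.adjoint ⟨A ⟨x, hx⟩, hAx⟩ = v := by
  intro v
  set e : WithLp 2 (H × H) ≃L[ℂ] H × H := WithLp.prodContinuousLinearEquiv 2 ℂ H H with he
  set G : Submodule ℂ (WithLp 2 (H × H)) := A.graph.comap (e : WithLp 2 (H × H) →ₗ[ℂ] H × H)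
    with hG
  have hGmem : ∀ p : WithLp 2 (H × H), p ∈ G ↔ e p ∈ A.graph := fun p => Iff.rfl
  have hGclosed : IsClosed (G : Set (WithLp 2 (H × H))) := by
    have : (G : Set (WithLp 2 (H × H))) = e ⁻¹' (A.graph : Set (H × H)) := rfl
    rw [this]
    exact hclosed.preimage e.continuous
  haveI : CompleteSpace G := hGclosed.completeSpace_coe
  obtain ⟨g, hg, z, hz, hdecomp⟩ := G.exists_add_mem_mem_orthogonal (e.symm (v, 0))
  set x : H := (e g).1 with hx
  have hgmem : e g ∈ A.graph := (hGmem g).mp hg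
  have hxdom : x ∈ A.domain := LinearPMap.mem_domain_of_mem_graph (by
    rw [← Prod.mk.eta (p := e g)] at hgmem; exact hgmem)
  have hAx : A ⟨x, hxdom⟩ = (e g).2 := by
    obtain ⟨y, hy1, hy2⟩ := A.mem_graph_iff.mp hgmem
    have : y = ⟨x, hxdom⟩ := Subtype.ext hy1
    rw [← hy2, this]
  set u : H := (e z).1 with hu
  set w : H := (e z).2 with hw
  have horth : ∀ q : A.domain, ⟪(q : H), u⟫_ℂ + ⟪A q, w⟫_ℂ = 0 := by
    intro q
    have hq : e.symm ((q : H), A q) ∈ G := by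
      rw [hGmem]; simpa using A.mem_graph q
    have := (Submodule.mem_orthogonal G z).mp hz _ hq
    rw [WithLp.prod_inner_apply] at this
    simpa [he, hu, hw] using this
  have hkey : ∀ q : A.domain, ⟪-u, (q : H)⟫_ℂ = ⟪w, A q⟫_ℂ := by
    intro q
    have h1 := horth q
    have h2 := congrArg (starRingEnd ℂ) h1
    simp only [map_add, inner_conj_symm, map_zero] at h2
    rw [inner_neg_left]
    linear_combination -h2
  have hwdom : w ∈ A.adjoint.domain :=
    LinearPMap.mem_adjoint_domain_of_exists _ ⟨-u, fun q => hkey q⟩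
  have hwval : A.adjoint ⟨w, hwdom⟩ = -u :=
    LinearPMap.adjoint_apply_eq hdense ⟨w, hwdom⟩ (fun q => hkey q)
  have heq : (v, (0 : H)) = e g + e z := by
    have := congrArg e hdecomp
    rwa [map_add, e.apply_symm_apply] at this
  have hv1 : x + u = v := (congrArg Prod.fst heq).symm
  have h0 : (0 : H) = (e g).2 + (e z).2 := by simpa using congrArg Prod.snd heq
  have hv2 : A ⟨x, hxdom⟩ + w = (0 : H) := by rw [hAx]; exact h0.symm
  have hwx : (-w : H) = A ⟨x, hxdom⟩ := neg_eq_of_add_eq_zero_left hv2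
  have hAxdom : A ⟨x, hxdom⟩ ∈ A.adjoint.domain := hwx ▸ (neg_mem hwdom)
  refine ⟨x, hxdom, hAxdom, ?_⟩
  have hval2 : A.adjoint ⟨A ⟨x, hxdom⟩, hAxdom⟩ = u := by
    have hsub : (⟨A ⟨x, hxdom⟩, hAxdom⟩ : A.adjoint.domain) = -⟨w, hwdom⟩ := by
      apply Subtype.ext
      simp [← hwx]
    rw [hsub, LinearPMap.map_neg, hwval, neg_neg]
  rw [hval2, hv1]

/-- If `A` is closed and densely defined, `0 ≤ B ≤ I` is bounded, `AB = BA` on a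
core `S` for `A`, and `B` maps `S` into `𝒟(A*A)`, then `B` preserves `𝒟(A)` with
`AB = BA` there, preserves `𝒟(A*A)` with `A*AB = BA*A` there, and `B` commutes with
the phase of `A`. -/
theorem bounded_commutes_with_phase
    (A : H →ₗ.[ℂ] H) (hdense : Dense (A.domain : Set H)) (hclosed : A.IsClosed)
    (B : H →L[ℂ] H) (hB0 : (B : H →L[ℂ] H).IsPositive)
    (hB1 : ((1 : H →L[ℂ] H) - B).IsPositive)
    (S : Submodule ℂ H) (hS : S ≤ A.domain)
    (hcore : (A.domRestrict S).closure = A)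
    (hcomm : ∀ x : A.domain, (x : H) ∈ S →
      ∃ hBx : B x ∈ A.domain, A ⟨B x, hBx⟩ = B (A x))
    (hBS : ∀ x : A.domain, (x : H) ∈ S →
      ∃ hBx : B (x : H) ∈ A.domain, A ⟨B x, hBx⟩ ∈ A.adjoint.domain) :
    (∀ x : A.domain, ∃ hBx : B x ∈ A.domain, A ⟨B x, hBx⟩ = B (A x)) ∧
    (∀ (x : A.domain) (hx : A x ∈ A.adjoint.domain),
      ∃ (h₁ : B (x : H) ∈ A.domain) (h₂ : A ⟨B x, h₁⟩ ∈ A.adjoint.domain),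
        A.adjoint ⟨A ⟨B x, h₁⟩, h₂⟩ = B (A.adjoint ⟨A x, hx⟩)) ∧
    (∀ V : H →L[ℂ] H, IsPhaseOf A V → B ∘L V = V ∘L B) := by
  classical
  have hBsa : IsSelfAdjoint B := hB0.isSelfAdjoint
  have hBinner : ∀ u v : H, ⟪B u, v⟫_ℂ = ⟪u, B v⟫_ℂ := fun u v => by
    rw [← ContinuousLinearMap.adjoint_inner_left, hBsa.adjoint_eq]
  -- Part 1 : B preserves the domain and commutes with A there
  have hpart1 : ∀ x : A.domain, ∃ hBx : B x ∈ A.domain, A ⟨B x, hBx⟩ = B (A x) := by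
    have hclosable : (A.domRestrict S).IsClosable :=
      hclosed.isClosable.leIsClosable LinearPMap.domRestrict_le
    have hgraph : (A.graph : Set (H × H)) = closure ((A.domRestrict S).graph : Set (H × H)) := by
      conv_lhs => rw [← hcore]
      rw [← hclosable.graph_closure_eq_closure_graph]
      exact (Submodule.topologicalClosure_coe _).symm
    intro x
    have hx : ((x : H), A x) ∈ closure ((A.domRestrict S).graph : Set (H × H)) := by
      rw [← hgraph]; exact A.mem_graph x
    set φ : H × H →L[ℂ] H × H := B.prodMap B with hφ
    have himg : φ '' ((A.domRestrict S).graph : Set (H × H)) ⊆ (A.graph : Set (H × H)) := by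
      rintro _ ⟨⟨u, v⟩, huv, rfl⟩
      have humem : u ∈ (A.domRestrict S).domain := LinearPMap.mem_domain_of_mem_graph huv
      have huS : u ∈ S := by
        rw [LinearPMap.domRestrict_domain] at humem; exact humem.1
      have huA : u ∈ A.domain := hS huS
      have hval : A ⟨u, huA⟩ = v := by
        have := LinearPMap.domRestrict_le.2 (x := ⟨u, humem⟩) (y := ⟨u, huA⟩) rfl
        rw [← this]
        obtain ⟨y, h1, h2⟩ := (A.domRestrict S).mem_graph_iff.mp huv
        have hyu : y = ⟨u, humem⟩ := Subtype.ext h1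
        rw [hyu] at h2
        exact h2
      obtain ⟨hBu, hBval⟩ := hcomm ⟨u, huA⟩ huS
      show φ (u, v) ∈ A.graph
      have : φ (u, v) = (B u, B v) := rfl
      rw [this]
      exact A.mem_graph_iff.mpr ⟨⟨B u, hBu⟩, rfl, by rw [hBval, hval]⟩
    have hmem : (B x, B (A x)) ∈ (A.graph : Set (H × H)) := by
      have h1 : φ ((x : H), A x) ∈ closure (φ '' ((A.domRestrict S).graph : Set (H × H))) :=
        (image_closure_subset_closure_image φ.continuous) ⟨_, hx, rfl⟩
      have h2 : closure (φ '' ((A.domRestrict S).graph : Set (H × H)))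
          ⊆ closure (A.graph : Set (H × H)) := closure_mono himg
      have h3 : closure (A.graph : Set (H × H)) = (A.graph : Set (H × H)) := hclosed.closure_eq
      exact h3 ▸ h2 h1
    obtain ⟨y, hy1, hy2⟩ := A.mem_graph_iff.mp hmem
    simp only at hy1 hy2
    refine ⟨hy1 ▸ y.2, ?_⟩
    rw [← hy2]
    congr 1
    exact Subtype.ext hy1.symm
  -- B commutes with the adjoint
  have hadjB : ∀ y : A.adjoint.domain, ∃ h : B y ∈ A.adjoint.domain,
      A.adjoint ⟨B y, h⟩ = B (A.adjoint y) := by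
    have key : ∀ (y : A.adjoint.domain) (x : A.domain),
        ⟪B (A.adjoint y), (x : H)⟫_ℂ = ⟪B (y : H), A x⟫_ℂ := by
      intro y x
      obtain ⟨hBx, hBval⟩ := hpart1 x
      calc ⟪B (A.adjoint y), (x : H)⟫_ℂ = ⟪A.adjoint y, B x⟫_ℂ := hBinner _ _
        _ = ⟪A.adjoint y, ((⟨B x, hBx⟩ : A.domain) : H)⟫_ℂ := rfl
        _ = ⟪(y : H), A ⟨B x, hBx⟩⟫_ℂ :=
            LinearPMap.adjoint_isFormalAdjoint hdense y ⟨B ↑x, hBx⟩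
        _ = ⟪(y : H), B (A x)⟫_ℂ := by rw [hBval]
        _ = ⟪B (y : H), A x⟫_ℂ := (hBinner _ _).symm
    intro y
    have hmem : B (y : H) ∈ A.adjoint.domain :=
      LinearPMap.mem_adjoint_domain_of_exists _ ⟨B (A.adjoint y), fun x => key y x⟩
    exact ⟨hmem, LinearPMap.adjoint_apply_eq hdense ⟨B y, hmem⟩ (fun x => key y x)⟩
  -- Part 2
  have hpart2 : ∀ (x : A.domain) (hx : A x ∈ A.adjoint.domain),
      ∃ (h₁ : B (x : H) ∈ A.domain) (h₂ : A ⟨B x, h₁⟩ ∈ A.adjoint.domain),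
        A.adjoint ⟨A ⟨B x, h₁⟩, h₂⟩ = B (A.adjoint ⟨A x, hx⟩) := by
    intro x hx
    obtain ⟨h₁, e₁⟩ := hpart1 x
    obtain ⟨h₂', e₂⟩ := hadjB ⟨A x, hx⟩
    have h₂ : A ⟨B x, h₁⟩ ∈ A.adjoint.domain := by rw [e₁]; exact h₂'
    refine ⟨h₁, h₂, ?_⟩
    have := pmap_happ A.adjoint (A ⟨B x, h₁⟩) (B (A x)) h₂ h₂' e₁
    rw [this, e₂]
  refine ⟨hpart1, hpart2, ?_⟩
  -- Phase part
  intro V hV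
  obtain ⟨T, ⟨hdomT, hTadj, hTpos, hinner⟩, hVT, hV0⟩ := hV
  have memT : ∀ {x : H}, x ∈ A.domain → x ∈ T.domain := fun {x} h => hdomT.symm ▸ h
  have memA : ∀ {x : H}, x ∈ T.domain → x ∈ A.domain := fun {x} h => hdomT ▸ h
  have hdenseT : Dense (T.domain : Set H) := by rw [hdomT]; exact hdense
  have hinner' : ∀ (x y : H) (hx : x ∈ A.domain) (hy : y ∈ A.domain)
      (hx' : x ∈ T.domain) (hy' : y ∈ T.domain),
      ⟪A ⟨x, hx⟩, A ⟨y, hy⟩⟫_ℂ = ⟪T ⟨x, hx'⟩, T ⟨y, hy'⟩⟫_ℂ := fun x y hx hy hx' hy' =>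
    hinner ⟨x, hx⟩ ⟨y, hy⟩ hx' hy'
  have hTsym : ∀ u v : T.domain, ⟪(T u : H), (v : H)⟫_ℂ = ⟪(u : H), T v⟫_ℂ := by
    intro u v
    have hu' : (u : H) ∈ T.adjoint.domain := by rw [hTadj]; exact u.2
    have h := LinearPMap.adjoint_isFormalAdjoint hdenseT ⟨(u : H), hu'⟩ v
    have h2 : T.adjoint ⟨(u : H), hu'⟩ = T u := pmap_congr' hTadj (u : H) hu'
    rw [h2] at h
    exact h
  -- T of T on dom(A*A)
  have hT2 : ∀ (v : H) (hv : v ∈ A.domain) (hAv : A ⟨v, hv⟩ ∈ A.adjoint.domain),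
      ∃ hTv : (T ⟨v, memT hv⟩ : H) ∈ T.domain,
        T ⟨T ⟨v, memT hv⟩, hTv⟩ = A.adjoint ⟨A ⟨v, hv⟩, hAv⟩ := by
    intro v hv hAv
    have hkey : ∀ x : T.domain,
        ⟪A.adjoint ⟨A ⟨v, hv⟩, hAv⟩, (x : H)⟫_ℂ = ⟪(T ⟨v, memT hv⟩ : H), T x⟫_ℂ := by
      intro x
      have hxA : (x : H) ∈ A.domain := memA x.2
      have h1 : ⟪A.adjoint ⟨A ⟨v, hv⟩, hAv⟩, (x : H)⟫_ℂ = ⟪A ⟨v, hv⟩, A ⟨(x : H), hxA⟩⟫_ℂ :=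
        LinearPMap.adjoint_isFormalAdjoint hdense ⟨A ⟨v, hv⟩, hAv⟩ ⟨(x : H), hxA⟩
      have h2 : ⟪A ⟨v, hv⟩, A ⟨(x : H), hxA⟩⟫_ℂ = ⟪T ⟨v, memT hv⟩, T ⟨(x : H), x.2⟩⟫_ℂ :=
        hinner' v x hv hxA _ x.2
      rw [h1, h2]
    have hmemadj : (T ⟨v, memT hv⟩ : H) ∈ T.adjoint.domain :=
      LinearPMap.mem_adjoint_domain_of_exists _ ⟨_, hkey⟩
    have hdomadj : T.adjoint.domain = T.domain := by rw [hTadj]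
    have hmem' : (T ⟨v, memT hv⟩ : H) ∈ T.domain := (SetLike.ext_iff.mp hdomadj _).mp hmemadj
    refine ⟨hmem', ?_⟩
    have hval := LinearPMap.adjoint_apply_eq hdenseT ⟨_, hmemadj⟩ hkey
    rw [← hval]
    exact (pmap_congr' hTadj _ hmemadj).symm
  -- converse : A*A = T² on dom(T²)
  have hT2' : ∀ (w : H) (hw : w ∈ T.domain) (hTw : (T ⟨w, hw⟩ : H) ∈ T.domain),
      ∃ hAw : A ⟨w, memA hw⟩ ∈ A.adjoint.domain,
        A.adjoint ⟨A ⟨w, memA hw⟩, hAw⟩ = T ⟨T ⟨w, hw⟩, hTw⟩ := by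
    intro w hw hTw
    have hkey : ∀ x : A.domain,
        ⟪(T ⟨T ⟨w, hw⟩, hTw⟩ : H), (x : H)⟫_ℂ = ⟪A ⟨w, memA hw⟩, A x⟫_ℂ := by
      intro x
      have hxT : (x : H) ∈ T.domain := memT x.2
      have h1 : ⟪(T ⟨T ⟨w, hw⟩, hTw⟩ : H), (x : H)⟫_ℂ = ⟪(T ⟨w, hw⟩ : H), T ⟨(x : H), hxT⟩⟫_ℂ :=
        hTsym ⟨T ⟨w, hw⟩, hTw⟩ ⟨(x : H), hxT⟩
      have h2 : ⟪A ⟨(x : H), x.2⟩, A ⟨w, memA hw⟩⟫_ℂ = ⟪T ⟨(x : H), hxT⟩, T ⟨w, hw⟩⟫_ℂ :=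
        hinner' x w x.2 (memA hw) hxT hw
      rw [h1, ← inner_conj_symm, ← h2, inner_conj_symm]
    have hmem : A ⟨w, memA hw⟩ ∈ A.adjoint.domain :=
      LinearPMap.mem_adjoint_domain_of_exists _ ⟨_, hkey⟩
    exact ⟨hmem, LinearPMap.adjoint_apply_eq hdense ⟨_, hmem⟩ hkey⟩
  -- resolvent
  choose r hr1 hr2 hr3 using oneAddAdjointMulSelf_surjective A hdense hclosed
  have hpos_id : ∀ (x : H) (hx : x ∈ A.domain) (hAx : A ⟨x, hx⟩ ∈ A.adjoint.domain),
      ⟪x + A.adjoint ⟨A ⟨x, hx⟩, hAx⟩, x⟫_ℂ = ⟪x, x⟫_ℂ + ⟪A ⟨x, hx⟩, A ⟨x, hx⟩⟫_ℂ := by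
    intro x hx hAx
    rw [inner_add_left]
    congr 1
    exact LinearPMap.adjoint_isFormalAdjoint hdense ⟨A ⟨x, hx⟩, hAx⟩ ⟨x, hx⟩
  have huniq : ∀ (v x : H) (hx : x ∈ A.domain) (hAx : A ⟨x, hx⟩ ∈ A.adjoint.domain),
      x + A.adjoint ⟨A ⟨x, hx⟩, hAx⟩ = v → x = r v := by
    intro v x hx hAx hsum
    have hd : x - r v ∈ A.domain := sub_mem hx (hr1 v)
    have hAd : A ⟨x - r v, hd⟩ = A ⟨x, hx⟩ - A ⟨r v, hr1 v⟩ := A.map_sub ⟨x, hx⟩ ⟨r v, hr1 v⟩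
    have hmems : A ⟨x, hx⟩ - A ⟨r v, hr1 v⟩ ∈ A.adjoint.domain := sub_mem hAx (hr2 v)
    have hAd' : A ⟨x - r v, hd⟩ ∈ A.adjoint.domain := by rw [hAd]; exact hmems
    have hval : A.adjoint ⟨A ⟨x - r v, hd⟩, hAd'⟩
        = A.adjoint ⟨A ⟨x, hx⟩, hAx⟩ - A.adjoint ⟨A ⟨r v, hr1 v⟩, hr2 v⟩ :=
      (pmap_happ A.adjoint _ _ hAd' hmems hAd).trans
        (A.adjoint.map_sub ⟨A ⟨x, hx⟩, hAx⟩ ⟨A ⟨r v, hr1 v⟩, hr2 v⟩)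
    have hzero : (x - r v) + A.adjoint ⟨A ⟨x - r v, hd⟩, hAd'⟩ = 0 := by
      rw [hval]
      have habel : (x - r v) + (A.adjoint ⟨A ⟨x, hx⟩, hAx⟩
            - A.adjoint ⟨A ⟨r v, hr1 v⟩, hr2 v⟩)
          = (x + A.adjoint ⟨A ⟨x, hx⟩, hAx⟩)
            - (r v + A.adjoint ⟨A ⟨r v, hr1 v⟩, hr2 v⟩) := by abel
      rw [habel, hsum, hr3 v, sub_self]
    have hinner0 := hpos_id (x - r v) hd hAd'
    rw [hzero] at hinner0
    have h1 : ‖x - r v‖ ^ 2 + ‖(A ⟨x - r v, hd⟩ : H)‖ ^ 2 = 0 := by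
      have hc := congrArg (RCLike.re (K := ℂ)) hinner0
      simp only [inner_zero_left, map_zero, map_add, inner_self_eq_norm_sq (𝕜 := ℂ)] at hc
      linarith
    have h2 : ‖x - r v‖ = 0 := by
      nlinarith [sq_nonneg ‖(A ⟨x - r v, hd⟩ : H)‖, norm_nonneg (x - r v)]
    have h3 : x - r v = 0 := norm_eq_zero.mp h2
    exact sub_eq_zero.mp h3
  -- linearity of the resolvent
  have hr_add : ∀ u v : H, r (u + v) = r u + r v := by
    intro u v
    have hm1 : r u + r v ∈ A.domain := add_mem (hr1 u) (hr1 v)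
    have hA_add : A ⟨r u + r v, hm1⟩ = A ⟨r u, hr1 u⟩ + A ⟨r v, hr1 v⟩ :=
      A.map_add ⟨r u, hr1 u⟩ ⟨r v, hr1 v⟩
    have hmems : A ⟨r u, hr1 u⟩ + A ⟨r v, hr1 v⟩ ∈ A.adjoint.domain :=
      add_mem (hr2 u) (hr2 v)
    have hm2 : A ⟨r u + r v, hm1⟩ ∈ A.adjoint.domain := by rw [hA_add]; exact hmems
    have hval : A.adjoint ⟨A ⟨r u + r v, hm1⟩, hm2⟩
        = A.adjoint ⟨A ⟨r u, hr1 u⟩, hr2 u⟩ + A.adjoint ⟨A ⟨r v, hr1 v⟩, hr2 v⟩ :=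
      (pmap_happ A.adjoint _ _ hm2 hmems hA_add).trans
        (A.adjoint.map_add ⟨A ⟨r u, hr1 u⟩, hr2 u⟩ ⟨A ⟨r v, hr1 v⟩, hr2 v⟩)
    refine (huniq (u + v) (r u + r v) hm1 hm2 ?_).symm
    rw [hval]
    have habel : (r u + r v) + (A.adjoint ⟨A ⟨r u, hr1 u⟩, hr2 u⟩
          + A.adjoint ⟨A ⟨r v, hr1 v⟩, hr2 v⟩)
        = (r u + A.adjoint ⟨A ⟨r u, hr1 u⟩, hr2 u⟩)
          + (r v + A.adjoint ⟨A ⟨r v, hr1 v⟩, hr2 v⟩) := by abel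
    rw [habel, hr3 u, hr3 v]
  have hr_smul : ∀ (c : ℂ) (v : H), r (c • v) = c • r v := by
    intro c v
    have hm1 : c • r v ∈ A.domain := Submodule.smul_mem _ c (hr1 v)
    have hA_smul : A ⟨c • r v, hm1⟩ = c • A ⟨r v, hr1 v⟩ := A.map_smul c ⟨r v, hr1 v⟩
    have hmems : c • A ⟨r v, hr1 v⟩ ∈ A.adjoint.domain := Submodule.smul_mem _ c (hr2 v)
    have hm2 : A ⟨c • r v, hm1⟩ ∈ A.adjoint.domain := by rw [hA_smul]; exact hmems
    have hval : A.adjoint ⟨A ⟨c • r v, hm1⟩, hm2⟩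
        = c • A.adjoint ⟨A ⟨r v, hr1 v⟩, hr2 v⟩ :=
      (pmap_happ A.adjoint _ _ hm2 hmems hA_smul).trans
        (A.adjoint.map_smul c ⟨A ⟨r v, hr1 v⟩, hr2 v⟩)
    refine (huniq (c • v) (c • r v) hm1 hm2 ?_).symm
    rw [hval, ← smul_add, hr3 v]
  -- B commutes with r
  have hRB : ∀ v : H, B (r v) = r (B v) := by
    intro v
    obtain ⟨h₁, h₂, hval⟩ := hpart2 ⟨r v, hr1 v⟩ (hr2 v)
    apply huniq (B v) (B (r v)) h₁ h₂
    rw [hval, ← map_add B, hr3 v]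
  -- norm bound for r
  have hre : ∀ v : H, (⟪v, r v⟫_ℂ).re = ‖r v‖ ^ 2 + ‖(A ⟨r v, hr1 v⟩ : H)‖ ^ 2 := by
    intro v
    have h := hpos_id (r v) (hr1 v) (hr2 v)
    rw [hr3 v] at h
    have hc := congrArg (RCLike.re (K := ℂ)) h
    simpa only [map_add, inner_self_eq_norm_sq (𝕜 := ℂ), RCLike.re_to_complex] using hc
  have hre_le : ∀ z : ℂ, z.re ≤ ‖z‖ := fun z => by
    simpa using RCLike.re_le_norm (K := ℂ) z
  have hrnorm : ∀ v : H, ‖r v‖ ≤ ‖v‖ := by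
    intro v
    have h2 : (⟪v, r v⟫_ℂ).re ≤ ‖v‖ * ‖r v‖ :=
      le_trans (hre_le _) (norm_inner_le_norm v (r v))
    have h1 : ‖r v‖ ^ 2 ≤ ‖v‖ * ‖r v‖ := by
      nlinarith [hre v, sq_nonneg ‖(A ⟨r v, hr1 v⟩ : H)‖]
    nlinarith [norm_nonneg (r v), norm_nonneg v]
  -- the bounded resolvent R
  set R₀ : H →ₗ[ℂ] H :=
    { toFun := r, map_add' := hr_add, map_smul' := hr_smul } with hR₀def
  set R : H →L[ℂ] H := R₀.mkContinuous 1 (fun v => by show ‖r v‖ ≤ 1 * ‖v‖; simpa using hrnorm v) with hRdef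
  have hRapp : ∀ v, R v = r v := fun v => rfl
  -- T of r v and its key identity
  have hT2r : ∀ v : H, ∃ h : (T ⟨r v, memT (hr1 v)⟩ : H) ∈ T.domain,
      T ⟨T ⟨r v, memT (hr1 v)⟩, h⟩ = A.adjoint ⟨A ⟨r v, hr1 v⟩, hr2 v⟩ :=
    fun v => hT2 (r v) (hr1 v) (hr2 v)
  choose hTr hTrval using hT2r
  -- T commutes with r on the domain of T
  have hTR : ∀ (y : H) (hy : y ∈ T.domain),
      T ⟨r y, memT (hr1 y)⟩ = r (T ⟨y, hy⟩) := by
    intro y hy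
    have hv : r y ∈ A.domain := hr1 y
    have hAv : A ⟨r y, hv⟩ ∈ A.adjoint.domain := hr2 y
    have hAAv : A.adjoint ⟨A ⟨r y, hv⟩, hAv⟩ = y - r y := eq_sub_of_add_eq' (hr3 y)
    have hTTv : T ⟨T ⟨r y, memT hv⟩, hTr y⟩ = y - r y := (hTrval y).trans hAAv
    have hyv : y - r y ∈ T.domain := sub_mem hy (memT hv)
    have h2 : (T ⟨T ⟨r y, memT hv⟩, hTr y⟩ : H) ∈ T.domain := by rw [hTTv]; exact hyv
    obtain ⟨hAw, hval⟩ := hT2' (T ⟨r y, memT hv⟩) (hTr y) h2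
    have h3 : T ⟨T ⟨T ⟨r y, memT hv⟩, hTr y⟩, h2⟩ = T ⟨y, hy⟩ - T ⟨r y, memT hv⟩ :=
      (pmap_happ T _ _ h2 hyv hTTv).trans (T.map_sub ⟨y, hy⟩ ⟨r y, memT hv⟩)
    refine huniq (T ⟨y, hy⟩) (T ⟨r y, memT hv⟩) (memA (hTr y)) hAw ?_
    rw [hval, h3]
    abel
  -- the bounded operator Z = T ∘ R
  have hZadd : ∀ u v : H, T ⟨r (u + v), memT (hr1 (u + v))⟩
      = T ⟨r u, memT (hr1 u)⟩ + T ⟨r v, memT (hr1 v)⟩ := by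
    intro u v
    have hm : r u + r v ∈ T.domain := add_mem (memT (hr1 u)) (memT (hr1 v))
    exact (pmap_happ T _ _ _ hm (hr_add u v)).trans
      (T.map_add ⟨r u, memT (hr1 u)⟩ ⟨r v, memT (hr1 v)⟩)
  have hZsmul : ∀ (c : ℂ) (v : H), T ⟨r (c • v), memT (hr1 (c • v))⟩
      = c • T ⟨r v, memT (hr1 v)⟩ := by
    intro c v
    have hm : c • r v ∈ T.domain := Submodule.smul_mem _ c (memT (hr1 v))
    exact (pmap_happ T _ _ _ hm (hr_smul c v)).trans (T.map_smul c ⟨r v, memT (hr1 v)⟩)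
  have hZnorm : ∀ v : H, ‖(T ⟨r v, memT (hr1 v)⟩ : H)‖ ≤ ‖v‖ := by
    intro v
    have h1 : ⟪(T ⟨r v, memT (hr1 v)⟩ : H), T ⟨r v, memT (hr1 v)⟩⟫_ℂ
        = ⟪(A ⟨r v, hr1 v⟩ : H), A ⟨r v, hr1 v⟩⟫_ℂ :=
      (hinner' (r v) (r v) (hr1 v) (hr1 v) (memT (hr1 v)) (memT (hr1 v))).symm
    have h2 : ‖(T ⟨r v, memT (hr1 v)⟩ : H)‖ ^ 2 = ‖(A ⟨r v, hr1 v⟩ : H)‖ ^ 2 := by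
      have := congrArg (RCLike.re (K := ℂ)) h1
      simpa only [inner_self_eq_norm_sq (𝕜 := ℂ)] using this
    have h3 : (⟪v, r v⟫_ℂ).re ≤ ‖v‖ * ‖r v‖ :=
      le_trans (hre_le _) (norm_inner_le_norm v (r v))
    have h4 : ‖r v‖ ≤ ‖v‖ := hrnorm v
    nlinarith [hre v, sq_nonneg ‖r v‖, norm_nonneg (r v), norm_nonneg v,
      norm_nonneg (T ⟨r v, memT (hr1 v)⟩ : H)]
  set Z₀ : H →ₗ[ℂ] H :=
    { toFun := fun v => T ⟨r v, memT (hr1 v)⟩, map_add' := hZadd, map_smul' := hZsmul }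
    with hZ₀def
  set Z : H →L[ℂ] H := Z₀.mkContinuous 1 (fun v => by show ‖(T ⟨r v, memT (hr1 v)⟩ : H)‖ ≤ 1 * ‖v‖; simpa using hZnorm v) with hZdef
  have hZapp : ∀ v, Z v = T ⟨r v, memT (hr1 v)⟩ := fun v => rfl
  have hexp : ∀ v : H, r v + (T ⟨T ⟨r v, memT (hr1 v)⟩, hTr v⟩ : H) = v := by
    intro v
    rw [hTrval v]
    exact hr3 v
  have hZsym : ∀ u v : H, ⟪Z u, v⟫_ℂ = ⟪u, Z v⟫_ℂ := by
    intro u v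
    rw [hZapp u, hZapp v]
    conv_lhs => rw [← hexp v]
    conv_rhs => rw [← hexp u]
    rw [inner_add_right, inner_add_left]
    congr 1
    · exact hTsym ⟨r u, memT (hr1 u)⟩ ⟨r v, memT (hr1 v)⟩
    · exact (hTsym ⟨T ⟨r u, memT (hr1 u)⟩, hTr u⟩ ⟨T ⟨r v, memT (hr1 v)⟩, hTr v⟩).symm
  have hZsa : IsSelfAdjoint Z :=
    ContinuousLinearMap.isSelfAdjoint_iff'.mpr
      (((ContinuousLinearMap.eq_adjoint_iff Z Z).mpr hZsym).symm)
  have hZposIP : Z.IsPositive := by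
    refine ⟨fun u v => hZsym u v, fun u => ?_⟩
    have hTru := hTpos ⟨r u, memT (hr1 u)⟩
    have hTTru := hTpos ⟨T ⟨r u, memT (hr1 u)⟩, hTr u⟩
    have hexpand : ⟪(Z u : H), u⟫_ℂ
        = ⟪(T ⟨r u, memT (hr1 u)⟩ : H), r u⟫_ℂ
          + ⟪(T ⟨r u, memT (hr1 u)⟩ : H), T ⟨T ⟨r u, memT (hr1 u)⟩, hTr u⟩⟫_ℂ := by
      rw [hZapp u]
      have hsum := congrArg (fun w : H => ⟪(T ⟨r u, memT (hr1 u)⟩ : H), w⟫_ℂ) (hexp u)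
      rw [← hsum, inner_add_right]
    rw [ContinuousLinearMap.reApplyInnerSelf_apply, hexpand, map_add]
    have h1 : RCLike.re (⟪(T ⟨r u, memT (hr1 u)⟩ : H), r u⟫_ℂ)
        = (⟪r u, (T ⟨r u, memT (hr1 u)⟩ : H)⟫_ℂ).re := by
      exact inner_re_symm _ _
    rw [h1]
    exact add_nonneg hTru.1 hTTru.1
  have hZpos : (0 : H →L[ℂ] H) ≤ Z := (ContinuousLinearMap.nonneg_iff_isPositive Z).mpr hZposIP
  -- Z² = R - R²
  have hZZ : ∀ u : H, Z (Z u) = R u - R (R u) := by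
    intro u
    have hcomm : r (Z u) = (T ⟨r (r u), memT (hr1 (r u))⟩ : H) := by
      have := hTR (r u) (memT (hr1 u))
      rw [hZapp u, ← this]
    have h1 : Z (Z u) = T ⟨T ⟨r (r u), memT (hr1 (r u))⟩, hTr (r u)⟩ := by
      rw [hZapp (Z u)]
      exact pmap_happ T _ _ (memT (hr1 (Z u))) (hTr (r u)) hcomm
    have h2 : A.adjoint ⟨A ⟨r (r u), hr1 (r u)⟩, hr2 (r u)⟩ = r u - r (r u) :=
      eq_sub_of_add_eq' (hr3 (r u))
    rw [h1, hTrval (r u), h2]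
    rfl
  have hZsq : Z * Z = R - R * R := by
    ext u
    simp only [ContinuousLinearMap.mul_apply, ContinuousLinearMap.sub_apply]
    exact hZZ u
  have hBRcomm : Commute B R := by
    apply ContinuousLinearMap.ext
    intro v
    simp only [ContinuousLinearMap.mul_apply]
    rw [hRapp v, hRapp (B v)]
    exact hRB v
  have hBZZ : Commute B (Z * Z) := by
    rw [hZsq]
    exact hBRcomm.sub_right (hBRcomm.mul_right hBRcomm)
  have hBZ : Commute B Z := commute_of_commute_sq hZpos hBZZ
  -- kernel of Z
  have hkerT : ∀ k : H, Z k = 0 → ∃ hk : k ∈ T.domain, T ⟨k, hk⟩ = 0 := by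
    intro k hk0
    have h1 : (T ⟨r k, memT (hr1 k)⟩ : H) = 0 := by rw [← hZapp k]; exact hk0
    have h2 : T ⟨T ⟨r k, memT (hr1 k)⟩, hTr k⟩ = 0 := by
      rw [pmap_happ T _ (0 : H) (hTr k) (zero_mem _) h1]
      exact T.map_zero
    have h3 : A.adjoint ⟨A ⟨r k, hr1 k⟩, hr2 k⟩ = 0 := by rw [← hTrval k]; exact h2
    have h4 : k = r k := by
      have := hr3 k
      rw [h3, add_zero] at this
      exact this.symm
    have hk : k ∈ T.domain := by rw [h4]; exact memT (hr1 k)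
    refine ⟨hk, ?_⟩
    rw [pmap_happ T k (r k) hk (memT (hr1 k)) h4]
    exact h1
  have hVker : ∀ (k : H) (hk : k ∈ T.domain), T ⟨k, hk⟩ = 0 → V k = 0 := by
    intro k hk hTk
    apply hV0
    intro x
    have h := hTsym ⟨k, hk⟩ x
    rw [hTk, inner_zero_left] at h
    exact h.symm
  have hkerBV : ∀ k : H, Z k = 0 → B (V k) = 0 ∧ V (B k) = 0 := by
    intro k hk0
    obtain ⟨hk, hTk⟩ := hkerT k hk0
    have hVk : V k = 0 := hVker k hk hTk
    have hAk : A ⟨k, memA hk⟩ = 0 := by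
      have h1 : ⟪(A ⟨k, memA hk⟩ : H), A ⟨k, memA hk⟩⟫_ℂ
          = ⟪(T ⟨k, hk⟩ : H), T ⟨k, hk⟩⟫_ℂ := hinner' k k (memA hk) (memA hk) hk hk
      rw [hTk, inner_zero_right] at h1
      exact inner_self_eq_zero.mp h1
    obtain ⟨hBk, hBAk⟩ := hpart1 ⟨k, memA hk⟩
    have hABk : A ⟨B k, hBk⟩ = 0 := by rw [hBAk, hAk, map_zero]
    have hTBk : T ⟨B k, memT hBk⟩ = 0 := by
      have h1 : ⟪(T ⟨B k, memT hBk⟩ : H), T ⟨B k, memT hBk⟩⟫_ℂ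
          = ⟪(A ⟨B k, hBk⟩ : H), A ⟨B k, hBk⟩⟫_ℂ :=
        (hinner' (B k) (B k) hBk hBk (memT hBk) (memT hBk)).symm
      rw [hABk, inner_zero_right] at h1
      exact inner_self_eq_zero.mp h1
    exact ⟨by rw [hVk, map_zero], hVker (B k) (memT hBk) hTBk⟩
  -- on the range of Z
  have hrange : ∀ u : H, B (V (Z u)) = V (B (Z u)) := by
    intro u
    have h1 : V (Z u) = A ⟨r u, hr1 u⟩ := by
      rw [hZapp u]
      exact hVT ⟨r u, hr1 u⟩ (memT (hr1 u))
    have hcommZ : B (Z u) = Z (B u) := by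
      have := congrArg (fun (W : H →L[ℂ] H) => W u) hBZ.eq
      simpa only [ContinuousLinearMap.mul_apply] using this
    have h2 : V (Z (B u)) = A ⟨r (B u), hr1 (B u)⟩ := by
      rw [hZapp (B u)]
      exact hVT ⟨r (B u), hr1 (B u)⟩ (memT (hr1 (B u)))
    obtain ⟨hB1, hBval⟩ := hpart1 ⟨r u, hr1 u⟩
    rw [h1, hcommZ, h2, ← hBval]
    exact pmap_happ A _ _ hB1 (hr1 (B u)) (hRB u)
  -- assembling via the orthogonal decomposition along ker Z
  set K : Submodule ℂ H := LinearMap.ker (Z : H →ₗ[ℂ] H) with hKdef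
  have hKclosed : IsClosed (K : Set H) := by
    have : (K : Set H) = {x | Z x = 0} := Set.ext fun x => LinearMap.mem_ker
    rw [this]
    exact isClosed_eq Z.continuous continuous_zero
  haveI : CompleteSpace K := hKclosed.completeSpace_coe
  have hDclosed : IsClosed {w : H | B (V w) = V (B w)} :=
    isClosed_eq (B.continuous.comp V.continuous) (V.continuous.comp B.continuous)
  have hKeq : (LinearMap.range (Z : H →ₗ[ℂ] H))ᗮ = K := by
    ext z
    constructor
    · intro hz
      have h := fun u : H => (Submodule.mem_orthogonal _ z).mp hz (Z u) ⟨u, rfl⟩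
      have h2 : ⟪(Z z : H), Z z⟫_ℂ = 0 := by
        have h3 := h (Z z)
        rwa [hZsym (Z z) z] at h3
      exact LinearMap.mem_ker.mpr (inner_self_eq_zero.mp h2)
    · intro hz
      rw [Submodule.mem_orthogonal]
      rintro _ ⟨u, rfl⟩
      rw [ContinuousLinearMap.coe_coe, hZsym u z, (show Z z = 0 from LinearMap.mem_ker.mp hz), inner_zero_right]
  have horthK : Kᗮ ≤ (LinearMap.range (Z : H →ₗ[ℂ] H)).topologicalClosure := by
    rw [← hKeq, Submodule.orthogonal_orthogonal_eq_closure]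
  have hgoal : ∀ w : H, B (V w) = V (B w) := by
    intro w
    obtain ⟨k, hk, z, hz, rfl⟩ := K.exists_add_mem_mem_orthogonal w
    have hkBV := hkerBV k (LinearMap.mem_ker.mp hk)
    have hzD : B (V z) = V (B z) := by
      have hzc : z ∈ closure ((LinearMap.range (Z : H →ₗ[ℂ] H) : Submodule ℂ H) : Set H) := by
        have hmem := horthK hz
        rwa [← Submodule.topologicalClosure_coe]
      have hsub : closure ((LinearMap.range (Z : H →ₗ[ℂ] H) : Submodule ℂ H) : Set H)
          ⊆ {w : H | B (V w) = V (B w)} := by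
        apply closure_minimal _ hDclosed
        rintro _ ⟨u, rfl⟩
        exact hrange u
      exact hsub hzc
    simp only [map_add]
    rw [hkBV.1, hkBV.2, hzD]
  ext w
  simp only [ContinuousLinearMap.comp_apply]
  exact hgoal w

end
end

section
/- Let M be a square matrix with non-negative real entries and let M' be a proper principal submatrix obtained by deleting at least one row and the corresponding column meeting a strictly positive entry of an irreducible block. If M is irreducible, then the Perron–Frobenius eigenvalue of M' is strictly less than that of M. -/
open Matrix Finset

namespace PFAux

variable {n : ℕ}

lemma pow_entry_nonneg (M : Matrix (Fin n) (Fin n) ℝ) (h : ∀ i j, 0 ≤ M i j) (t : ℕ) :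
    ∀ i j, 0 ≤ (M ^ t) i j := by
  induction t with
  | zero =>
    intro i j
    rw [pow_zero]
    by_cases hij : i = j <;> simp [Matrix.one_apply, hij]
  | succ t ih =>
    intro i j
    rw [pow_succ, Matrix.mul_apply]
    exact Finset.sum_nonneg fun l _ => mul_nonneg (ih i l) (h l j)

lemma mulVec_apply' (M : Matrix (Fin n) (Fin n) ℝ) (x : Fin n → ℝ) (i : Fin n) :
    (M *ᵥ x) i = ∑ j, M i j * x j := rfl

lemma mulVec_nonneg (M : Matrix (Fin n) (Fin n) ℝ) (h : ∀ i j, 0 ≤ M i j)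
    {x : Fin n → ℝ} (hx : ∀ j, 0 ≤ x j) : ∀ i, 0 ≤ (M *ᵥ x) i := fun i => by
  rw [mulVec_apply']
  exact Finset.sum_nonneg fun j _ => mul_nonneg (h i j) (hx j)

lemma mulVec_mono (M : Matrix (Fin n) (Fin n) ℝ) (h : ∀ i j, 0 ≤ M i j)
    {x y : Fin n → ℝ} (hxy : ∀ j, x j ≤ y j) : ∀ i, (M *ᵥ x) i ≤ (M *ᵥ y) i := fun i => by
  rw [mulVec_apply', mulVec_apply']
  exact Finset.sum_le_sum fun j _ => mul_le_mul_of_nonneg_left (hxy j) (h i j)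


lemma exists_posSum (M : Matrix (Fin n) (Fin n) ℝ) (h : ∀ i j, 0 ≤ M i j)
    (hirr : ∀ i j : Fin n, ∃ m : ℕ, 0 < (M ^ (m + 1)) i j) :
    ∃ L : ℕ, ∀ i j, 0 < (∑ t ∈ Finset.range (L + 1), M ^ t) i j := by
  choose m hm using hirr
  refine ⟨∑ p : Fin n × Fin n, (m p.1 p.2 + 1), fun i j => ?_⟩
  rw [Matrix.sum_apply]
  have hmem : m i j + 1 ∈ Finset.range ((∑ p : Fin n × Fin n, (m p.1 p.2 + 1)) + 1) := by
    rw [Finset.mem_range]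
    have : m i j + 1 ≤ ∑ p : Fin n × Fin n, (m p.1 p.2 + 1) :=
      Finset.single_le_sum (f := fun p : Fin n × Fin n => m p.1 p.2 + 1)
        (fun _ _ => Nat.zero_le _) (Finset.mem_univ (i, j))
    omega
  calc (0:ℝ) < (M ^ (m i j + 1)) i j := hm i j
    _ ≤ _ := Finset.single_le_sum (fun t _ => pow_entry_nonneg M h t i j) hmem

lemma exists_positive_eigenvector (hn : 0 < n) (N : Matrix (Fin n) (Fin n) ℝ)
    (hpos : ∀ i j, 0 ≤ N i j)
    (hirr : ∀ i j : Fin n, ∃ m : ℕ, 0 < (N ^ (m + 1)) i j) :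
    ∃ r : ℝ, 0 < r ∧ ∃ x : Fin n → ℝ, (∀ i, 0 < x i) ∧ N *ᵥ x = r • x := by
  haveI : Nonempty (Fin n) := ⟨⟨0, hn⟩⟩
  obtain ⟨L, hB⟩ := exists_posSum N hpos hirr
  set B : Matrix (Fin n) (Fin n) ℝ := ∑ t ∈ Finset.range (L + 1), N ^ t with hBdef
  have hBnn : ∀ i j, 0 ≤ B i j := fun i j => (hB i j).le
  have hBN : N * B = B * N := by
    rw [hBdef, Finset.mul_sum, Finset.sum_mul]
    exact Finset.sum_congr rfl fun t _ => by rw [← pow_succ, ← pow_succ']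
  have key : ∀ z : Fin n → ℝ, (∀ j, 0 ≤ z j) → z ≠ 0 → ∀ i, 0 < (B *ᵥ z) i := by
    intro z hz hzne i
    obtain ⟨q, hq⟩ : ∃ q, 0 < z q := by
      by_contra hcon
      push_neg at hcon
      exact hzne (funext fun j => le_antisymm (hcon j) (hz j))
    rw [mulVec_apply']
    calc (0:ℝ) < B i q * z q := mul_pos (hB i q) hq
      _ ≤ ∑ j, B i j * z j :=
        Finset.single_le_sum (fun j _ => mul_nonneg (hBnn i j) (hz j)) (mem_univ q)
  set C : ℝ := ∑ i, ∑ j, N i j with hCdef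
  have hC0 : 0 ≤ C := Finset.sum_nonneg fun i _ => Finset.sum_nonneg fun j _ => hpos i j
  have bound : ∀ (l : ℝ) (x : Fin n → ℝ), x ∈ stdSimplex ℝ (Fin n) →
      (∀ i, l * x i ≤ (N *ᵥ x) i) → l ≤ C := by
    intro l x hx hineq
    have hx1 : ∀ j, x j ≤ 1 := fun j =>
      hx.2 ▸ Finset.single_le_sum (fun i _ => hx.1 i) (mem_univ j)
    calc l = l * ∑ i, x i := by rw [hx.2, mul_one]
      _ = ∑ i, l * x i := by rw [Finset.mul_sum]
      _ ≤ ∑ i, (N *ᵥ x) i := Finset.sum_le_sum fun i _ => hineq i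
      _ = ∑ i, ∑ j, N i j * x j := by simp only [mulVec_apply']
      _ ≤ ∑ i, ∑ j, N i j := Finset.sum_le_sum fun i _ => Finset.sum_le_sum fun j _ => by
          nlinarith [hpos i j, hx.1 j, hx1 j]
  set A : Set (ℝ × (Fin n → ℝ)) :=
    {p | p.1 ∈ Set.Icc 0 C ∧ p.2 ∈ stdSimplex ℝ (Fin n) ∧ ∀ i, p.1 * p.2 i ≤ (N *ᵥ p.2) i}
    with hAdef
  have hAclosed : IsClosed A := by
    have : A = (Set.Icc 0 C ×ˢ stdSimplex ℝ (Fin n)) ∩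
        ⋂ i : Fin n, {p : ℝ × (Fin n → ℝ) | p.1 * p.2 i ≤ ∑ j, N i j * p.2 j} := by
      ext p
      simp only [hAdef, Set.mem_setOf_eq, Set.mem_inter_iff, Set.mem_prod, Set.mem_iInter,
        mulVec_apply', and_assoc]
    rw [this]
    refine IsClosed.inter (IsClosed.prod isClosed_Icc (isClosed_stdSimplex ℝ _))
      (isClosed_iInter fun i => isClosed_le (by fun_prop) (by fun_prop))
  have hAc : IsCompact A :=
    IsCompact.of_isClosed_subset ((isCompact_Icc).prod (isCompact_stdSimplex ℝ (Fin n)))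
      hAclosed (fun p hp => ⟨hp.1, hp.2.1⟩)
  have hAne : A.Nonempty := by
    refine ⟨(0, fun _ => (n : ℝ)⁻¹), ⟨le_refl 0, hC0⟩, ⟨fun i => by positivity, ?_⟩, fun i => ?_⟩
    · simp only [Finset.sum_const, Finset.card_univ, Fintype.card_fin, nsmul_eq_mul]
      field_simp
    · rw [zero_mul]
      exact mulVec_nonneg N hpos (fun j => by positivity) i
  obtain ⟨⟨r, x⟩, hmem, hmax⟩ := hAc.exists_isMaxOn hAne continuous_fst.continuousOn
  obtain ⟨hrIcc, hxS, hineq⟩ := hmem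
  have hr0 : 0 ≤ r := hrIcc.1
  have hxne : x ≠ 0 := by
    intro h0
    have := hxS.2
    rw [h0] at this
    simp at this
  have heq : N *ᵥ x = r • x := by
    by_contra hne
    set d : Fin n → ℝ := fun i => (N *ᵥ x) i - r * x i with hd
    have hd0 : ∀ i, 0 ≤ d i := fun i => sub_nonneg.2 (hineq i)
    have hdne : d ≠ 0 := by
      intro h0
      apply hne
      funext i
      have h1 := congrFun h0 i
      simp only [hd, Pi.zero_apply] at h1
      simp only [Pi.smul_apply, smul_eq_mul]
      linarith
    set z := B *ᵥ d with hzdef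
    have hz : ∀ i, 0 < z i := key d hd0 hdne
    set y := B *ᵥ x with hydef
    have hy : ∀ i, 0 < y i := key x hxS.1 hxne
    have hNy : ∀ i, (N *ᵥ y) i = r * y i + z i := by
      have h1 : N *ᵥ y = B *ᵥ (N *ᵥ x) := by
        rw [hydef, mulVec_mulVec, hBN, ← mulVec_mulVec]
      have h2 : (N *ᵥ x) = d + r • x := by
        funext i
        simp only [hd, Pi.add_apply, Pi.smul_apply, smul_eq_mul]
        ring
      intro i
      rw [h1, h2, mulVec_add, mulVec_smul]
      simp only [Pi.add_apply, Pi.smul_apply, smul_eq_mul, hzdef, hydef]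
      ring
    set ε : ℝ := Finset.univ.inf' Finset.univ_nonempty (fun i => z i / y i) with hεdef
    have hε : 0 < ε := by
      rw [hεdef, Finset.lt_inf'_iff]
      exact fun i _ => div_pos (hz i) (hy i)
    have hεy : ∀ i, ε * y i ≤ z i := by
      intro i
      have h3 : ε ≤ z i / y i := Finset.inf'_le _ (mem_univ i)
      calc ε * y i ≤ (z i / y i) * y i := mul_le_mul_of_nonneg_right h3 (hy i).le
        _ = z i := div_mul_cancel₀ _ (hy i).ne'
    have hstep : ∀ i, (r + ε) * y i ≤ (N *ᵥ y) i := fun i => by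
      rw [hNy i]
      nlinarith [hεy i]
    set σy : ℝ := ∑ i, y i with hσdef
    have hσ : 0 < σy := Finset.sum_pos (fun i _ => hy i) Finset.univ_nonempty
    set y' := σy⁻¹ • y with hy'def
    have hy'S : y' ∈ stdSimplex ℝ (Fin n) := by
      refine ⟨fun i => by
        simp only [hy'def, Pi.smul_apply, smul_eq_mul]
        exact mul_nonneg (inv_nonneg.2 hσ.le) (hy i).le, ?_⟩
      simp only [hy'def, Pi.smul_apply, smul_eq_mul, ← Finset.mul_sum, ← hσdef]
      field_simp
    have hy'ineq : ∀ i, (r + ε) * y' i ≤ (N *ᵥ y') i := by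
      intro i
      have h4 : (N *ᵥ y') = σy⁻¹ • (N *ᵥ y) := by rw [hy'def, mulVec_smul]
      rw [h4]
      simp only [hy'def, Pi.smul_apply, smul_eq_mul]
      have h5 := hstep i
      have h6 : (0:ℝ) ≤ σy⁻¹ := inv_nonneg.2 hσ.le
      nlinarith
    have hle : r + ε ≤ C := bound _ _ hy'S hy'ineq
    have hmem' : (r + ε, y') ∈ A := by
      refine ⟨Set.mem_Icc.mpr ⟨(by linarith : (0:ℝ) ≤ r + ε), hle⟩, hy'S, hy'ineq⟩
    have h7 : r + ε ≤ r := hmax hmem'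
    linarith
  have hpow : ∀ t : ℕ, (N ^ t) *ᵥ x = (r ^ t) • x := by
    intro t
    induction t with
    | zero => simp
    | succ t ih =>
      rw [pow_succ', ← mulVec_mulVec, ih, mulVec_smul, heq, smul_smul, pow_succ', mul_comm]
  have hBx : B *ᵥ x = (∑ t ∈ Finset.range (L + 1), r ^ t) • x := by
    funext i
    rw [mulVec_apply']
    simp only [hBdef, Matrix.sum_apply, Finset.sum_mul]
    rw [Finset.sum_comm]
    simp only [Pi.smul_apply, smul_eq_mul, Finset.sum_mul]
    refine Finset.sum_congr rfl fun t _ => ?_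
    have ht := congrFun (hpow t) i
    rw [mulVec_apply'] at ht
    rw [ht]
    simp
  have hs : (0:ℝ) < ∑ t ∈ Finset.range (L + 1), r ^ t := by
    have h8 : (1:ℝ) ≤ ∑ t ∈ Finset.range (L + 1), r ^ t := by
      have := Finset.single_le_sum (f := fun t => r ^ t)
        (fun t _ => pow_nonneg hr0 t) (Finset.mem_range.2 (Nat.succ_pos L))
      simpa using this
    linarith
  have hx_pos : ∀ i, 0 < x i := by
    intro i
    have h9 : 0 < (B *ᵥ x) i := key x hxS.1 hxne i
    rw [hBx] at h9
    simp only [Pi.smul_apply, smul_eq_mul] at h9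
    nlinarith
  have hrpos : 0 < r := by
    obtain ⟨a, b, hab⟩ : ∃ a b, 0 < N a b := by
      by_contra hcon
      push_neg at hcon
      obtain ⟨m, hm⟩ := hirr ⟨0, hn⟩ ⟨0, hn⟩
      have hN0 : N = 0 := funext fun a => funext fun b => le_antisymm (hcon a b) (hpos a b)
      rw [hN0, zero_pow (Nat.succ_ne_zero m)] at hm
      simp at hm
    have h10 : 0 < (N *ᵥ x) a := by
      rw [mulVec_apply']
      calc (0:ℝ) < N a b * x b := mul_pos hab (hx_pos b)
        _ ≤ ∑ j, N a j * x j :=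
          Finset.single_le_sum (fun j _ => mul_nonneg (hpos a j) (hx_pos j).le) (mem_univ b)
    rw [heq] at h10
    simp only [Pi.smul_apply, smul_eq_mul] at h10
    nlinarith [hx_pos a]
  exact ⟨r, hrpos, x, hx_pos, heq⟩

lemma strict_subinvariant (M : Matrix (Fin n) (Fin n) ℝ) (hpos : ∀ i j, 0 ≤ M i j)
    (hirr : ∀ i j : Fin n, ∃ m : ℕ, 0 < (M ^ (m + 1)) i j)
    {r : ℝ} (hr : 0 < r) {x : Fin n → ℝ} (hx : ∀ i, 0 < x i)
    (hMx : Mᵀ *ᵥ x = r • x)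
    {s : ℝ} (hs : 0 ≤ s) {w : Fin n → ℝ} (hw0 : ∀ j, 0 ≤ w j) (hwne : w ≠ 0)
    {p : Fin n} (hwp : w p = 0) (hsw : ∀ i, s * w i ≤ (M *ᵥ w) i) : s < r := by
  obtain ⟨q, hq⟩ : ∃ q, 0 < w q := by
    by_contra hcon
    push_neg at hcon
    exact hwne (funext fun j => le_antisymm (hcon j) (hw0 j))
  obtain ⟨m, hm⟩ := hirr p q
  set t := m + 1 with htdef
  have hstep : ∀ u : ℕ, ∀ i, s ^ u * w i ≤ ((M ^ u) *ᵥ w) i := by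
    intro u
    induction u with
    | zero => intro i; simp [Matrix.one_mulVec]
    | succ u ih =>
      intro i
      have h1 : (M ^ (u + 1)) *ᵥ w = M *ᵥ ((M ^ u) *ᵥ w) := by
        rw [mulVec_mulVec, ← pow_succ']
      rw [h1]
      have h3 := mulVec_mono M hpos (x := fun j => s ^ u * w j) (y := (M ^ u) *ᵥ w) ih i
      have h4 : (M *ᵥ fun j => s ^ u * w j) i = s ^ u * (M *ᵥ w) i := by
        rw [mulVec_apply', mulVec_apply', Finset.mul_sum]
        exact Finset.sum_congr rfl fun j _ => by ring
      calc s ^ (u + 1) * w i = s ^ u * (s * w i) := by ring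
        _ ≤ s ^ u * (M *ᵥ w) i := mul_le_mul_of_nonneg_left (hsw i) (pow_nonneg hs u)
        _ = (M *ᵥ fun j => s ^ u * w j) i := h4.symm
        _ ≤ _ := h3
  have hxpow : ∀ u : ℕ, (Mᵀ ^ u) *ᵥ x = (r ^ u) • x := by
    intro u
    induction u with
    | zero => simp
    | succ u ih =>
      rw [pow_succ', ← mulVec_mulVec, ih, mulVec_smul, hMx, smul_smul, pow_succ', mul_comm]
  have hdot : x ⬝ᵥ ((M ^ t) *ᵥ w) = r ^ t * (x ⬝ᵥ w) := by
    rw [dotProduct_mulVec, ← mulVec_transpose, transpose_pow, hxpow t, smul_dotProduct,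
      smul_eq_mul]
  have hc : 0 < x ⬝ᵥ w := by
    calc (0:ℝ) < x q * w q := mul_pos (hx q) hq
      _ ≤ ∑ i, x i * w i :=
        Finset.single_le_sum (fun i _ => mul_nonneg (hx i).le (hw0 i)) (mem_univ q)
  have hlt : s ^ t * (x ⬝ᵥ w) < x ⬝ᵥ ((M ^ t) *ᵥ w) := by
    have h5 : s ^ t * (x ⬝ᵥ w) = ∑ i, x i * (s ^ t * w i) := by
      show s ^ t * ∑ i, x i * w i = _
      rw [Finset.mul_sum]
      exact Finset.sum_congr rfl fun i _ => by ring
    have h6 : x ⬝ᵥ ((M ^ t) *ᵥ w) = ∑ i, x i * (((M ^ t) *ᵥ w) i) := rfl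
    rw [h5, h6]
    apply Finset.sum_lt_sum
    · intro i _
      exact mul_le_mul_of_nonneg_left (hstep t i) (hx i).le
    · refine ⟨p, mem_univ p, ?_⟩
      have h7 : (M ^ t) p q * w q ≤ ((M ^ t) *ᵥ w) p := by
        rw [mulVec_apply']
        exact Finset.single_le_sum
          (fun j _ => mul_nonneg (pow_entry_nonneg M hpos t p j) (hw0 j)) (mem_univ q)
      have h8 : 0 < ((M ^ t) *ᵥ w) p := lt_of_lt_of_le (mul_pos hm hq) h7
      calc x p * (s ^ t * w p) = 0 := by rw [hwp]; ring
        _ < x p * (((M ^ t) *ᵥ w) p) := mul_pos (hx p) h8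
  rw [hdot] at hlt
  have h9 : s ^ t < r ^ t := by nlinarith
  exact lt_of_pow_lt_pow_left₀ t hr.le h9

lemma mem_spectrum_of_eigen {k : ℕ} (A : Matrix (Fin k) (Fin k) ℝ) {μ : ℝ} {v : Fin k → ℝ}
    (hv : v ≠ 0) (h : A *ᵥ v = μ • v) : μ ∈ spectrum ℝ A := by
  rw [spectrum.mem_iff]
  intro hunit
  rw [Matrix.isUnit_iff_isUnit_det] at hunit
  have hdet : (algebraMap ℝ (Matrix (Fin k) (Fin k) ℝ) μ - A).det = 0 := by
    rw [Matrix.exists_mulVec_eq_zero_iff.symm]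
    refine ⟨v, hv, ?_⟩
    rw [Matrix.sub_mulVec, Algebra.algebraMap_eq_smul_one, Matrix.smul_mulVec,
      Matrix.one_mulVec, h, sub_self]
  rw [hdet] at hunit
  simp at hunit

lemma eigen_of_mem_spectrum {k : ℕ} (A : Matrix (Fin k) (Fin k) ℝ) {μ : ℝ}
    (h : μ ∈ spectrum ℝ A) : ∃ v, v ≠ 0 ∧ A *ᵥ v = μ • v := by
  rw [spectrum.mem_iff, Matrix.isUnit_iff_isUnit_det, isUnit_iff_ne_zero, not_not] at h
  obtain ⟨v, hv, hv0⟩ := Matrix.exists_mulVec_eq_zero_iff.mpr h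
  refine ⟨v, hv, ?_⟩
  rw [Matrix.sub_mulVec, Algebra.algebraMap_eq_smul_one, Matrix.smul_mulVec,
    Matrix.one_mulVec, sub_eq_zero] at hv0
  exact hv0.symm

lemma mem_spectrum_of_transpose {k : ℕ} (A : Matrix (Fin k) (Fin k) ℝ) {μ : ℝ}
    (h : μ ∈ spectrum ℝ Aᵀ) : μ ∈ spectrum ℝ A := by
  rw [spectrum.mem_iff, Matrix.isUnit_iff_isUnit_det] at h ⊢
  intro hc
  apply h
  have heq : (algebraMap ℝ (Matrix (Fin k) (Fin k) ℝ) μ - Aᵀ)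
      = (algebraMap ℝ (Matrix (Fin k) (Fin k) ℝ) μ - A)ᵀ := by
    simp [Algebra.algebraMap_eq_smul_one, Matrix.transpose_sub, Matrix.transpose_smul]
  rw [heq, Matrix.det_transpose]
  exact hc


end PFAux

/-- A non-negative square matrix is irreducible if its directed graph (with an edge
`i → j` whenever `M i j > 0`) is strongly connected, i.e. for all `i, j` some power
`M^m` with `m ≥ 1` has a strictly positive `(i,j)` entry. -/
def Matrix.PFIrreducible {n : ℕ} (M : Matrix (Fin n) (Fin n) ℝ) : Prop :=
  ∀ i j : Fin n, ∃ m : ℕ, 0 < (M ^ (m + 1)) i j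

/-- Perron–Frobenius strict monotonicity: if `M` is an irreducible matrix with
non-negative entries and `M'` is a proper principal submatrix of `M` (obtained by
deleting at least one row and the corresponding column; by irreducibility every
index meets a strictly positive entry), then the Perron–Frobenius eigenvalue
(spectral radius) of `M'` is strictly less than that of `M`. -/
theorem perronFrobenius_strict_mono_principal_submatrix
    {n k : ℕ} (M : Matrix (Fin n) (Fin n) ℝ)
    (hpos : ∀ i j, 0 ≤ M i j) (hirr : Matrix.PFIrreducible M)
    (e : Fin k ↪ Fin n) (hk : k < n) :
    spectralRadius ℝ (M.submatrix e e) < spectralRadius ℝ M := by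
  have hn : 0 < n := lt_of_le_of_lt (Nat.zero_le k) hk
  have hirrT : ∀ i j : Fin n, ∃ m : ℕ, 0 < (Mᵀ ^ (m + 1)) i j := by
    intro i j
    obtain ⟨m, hm⟩ := hirr j i
    exact ⟨m, by rwa [← Matrix.transpose_pow, Matrix.transpose_apply]⟩
  obtain ⟨r, hr, x, hx, heig⟩ :=
    PFAux.exists_positive_eigenvector hn Mᵀ (fun i j => hpos j i) hirrT
  have hxne : x ≠ 0 := fun h0 => (hx ⟨0, hn⟩).ne' (congrFun h0 ⟨0, hn⟩)
  have hrspec : r ∈ spectrum ℝ M :=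
    PFAux.mem_spectrum_of_transpose M (PFAux.mem_spectrum_of_eigen Mᵀ hxne heig)
  obtain ⟨p, hp⟩ : ∃ p : Fin n, ∀ i : Fin k, e i ≠ p := by
    by_contra hcon
    push_neg at hcon
    have hsurj : Function.Surjective e := fun p => hcon p
    have := Fintype.card_le_of_surjective e hsurj
    simp only [Fintype.card_fin] at this
    omega
  have hkey : ∀ μ ∈ spectrum ℝ (M.submatrix e e), |μ| < r := by
    intro μ hμ
    obtain ⟨v, hv, hv'⟩ := PFAux.eigen_of_mem_spectrum _ hμ
    set w : Fin n → ℝ := Function.extend e (fun i => |v i|) 0 with hwdef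
    have hwe : ∀ i : Fin k, w (e i) = |v i| := fun i => e.injective.extend_apply _ _ i
    have hwnot : ∀ j, (∀ i, e i ≠ j) → w j = 0 := by
      intro j hj
      rw [hwdef, Function.extend_apply' _ _ _ (fun ⟨i, hi⟩ => hj i hi)]
      rfl
    have hw0 : ∀ j, 0 ≤ w j := by
      intro j
      by_cases hj : ∃ i, e i = j
      · obtain ⟨i, rfl⟩ := hj
        rw [hwe]
        exact abs_nonneg _
      · push_neg at hj
        rw [hwnot j hj]
    have hwne : w ≠ 0 := by
      obtain ⟨i, hi⟩ : ∃ i, v i ≠ 0 := by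
        by_contra hc
        push_neg at hc
        exact hv (funext hc)
      intro h0
      have h1 := congrFun h0 (e i)
      rw [hwe] at h1
      exact hi (abs_eq_zero.mp h1)
    have hwp : w p = 0 := hwnot p (fun i => hp i)
    have hsw : ∀ j, |μ| * w j ≤ (M *ᵥ w) j := by
      intro j
      by_cases hj : ∃ i, e i = j
      · obtain ⟨i, rfl⟩ := hj
        rw [hwe]
        have h1 : (M.submatrix e e *ᵥ (fun i' => |v i'|)) i ≤ (M *ᵥ w) (e i) := by
          rw [PFAux.mulVec_apply', PFAux.mulVec_apply']
          have h2 : ∑ i', M.submatrix e e i i' * |v i'|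
              = ∑ j' ∈ Finset.univ.map e, M (e i) j' * w j' := by
            rw [Finset.sum_map]
            exact Finset.sum_congr rfl fun i' _ => by
              show M.submatrix e e i i' * |v i'| = M (e i) (e i') * w (e i')
              rw [Matrix.submatrix_apply, hwe]
          rw [h2]
          exact Finset.sum_le_sum_of_subset_of_nonneg (Finset.subset_univ _)
            (fun j' _ _ => mul_nonneg (hpos _ _) (hw0 j'))
        refine le_trans ?_ h1
        have h3 : |μ| * |v i| = |(M.submatrix e e *ᵥ v) i| := by
          rw [hv']
          simp [abs_mul]
        rw [h3, PFAux.mulVec_apply', PFAux.mulVec_apply']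
        calc |∑ i', M.submatrix e e i i' * v i'|
            ≤ ∑ i', |M.submatrix e e i i' * v i'| := Finset.abs_sum_le_sum_abs _ _
          _ = ∑ i', M.submatrix e e i i' * |v i'| := Finset.sum_congr rfl fun i' _ => by
              rw [abs_mul, abs_of_nonneg (by exact hpos _ _)]
      · push_neg at hj
        rw [hwnot j hj, mul_zero]
        exact PFAux.mulVec_nonneg M hpos hw0 j
    exact PFAux.strict_subinvariant M hpos hirr hr hx heig (abs_nonneg μ) hw0 hwne hwp hsw
  have hrle : (‖r‖₊ : ENNReal) ≤ spectralRadius ℝ M := by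
    simp only [spectralRadius]
    exact le_iSup₂ (f := fun μ (_ : μ ∈ spectrum ℝ M) => (‖μ‖₊ : ENNReal)) r hrspec
  rcases (spectrum ℝ (M.submatrix e e)).eq_empty_or_nonempty with hemp | hne
  · have h0 : spectralRadius ℝ (M.submatrix e e) = 0 := by
      simp [spectralRadius, hemp]
    rw [h0]
    refine lt_of_lt_of_le ?_ hrle
    simp only [ENNReal.coe_pos]
    rw [pos_iff_ne_zero, ne_eq, nnnorm_eq_zero]
    exact hr.ne'
  · obtain ⟨μ₀, hμ₀mem, hμ₀max⟩ :=
      Set.exists_max_image _ (fun μ => |μ|) (Matrix.finite_spectrum _) hne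
    have hsup : spectralRadius ℝ (M.submatrix e e) ≤ (‖μ₀‖₊ : ENNReal) := by
      simp only [spectralRadius]
      refine iSup₂_le fun μ hμ => ?_
      rw [ENNReal.coe_le_coe, ← NNReal.coe_le_coe, coe_nnnorm, coe_nnnorm,
        Real.norm_eq_abs, Real.norm_eq_abs]
      exact hμ₀max μ hμ
    refine lt_of_le_of_lt hsup (lt_of_lt_of_le ?_ hrle)
    rw [ENNReal.coe_lt_coe, ← NNReal.coe_lt_coe, coe_nnnorm, coe_nnnorm,
      Real.norm_eq_abs, Real.norm_eq_abs, abs_of_pos hr]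
    exact hkey μ₀ hμ₀mem
end
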